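/- arXiv:2411.02681 — 8 statements merged into one kernel-verified Lean document; each statement's English description precedes it below -/
import Mathlib

section
/- Let k ≥ 1, n = 2^k, d = 2^{k−1}, ζ = exp(2πi/n), and K = ℚ(ζ) ⊆ ℂ with ℚ-basis (1, ζ, …, ζ^{d−1}). For U ∈ K^{N×N} define Ψ(U) ∈ ℚ^{dN×dN} as the N×N block matrix whose (i,j) block is M_{U_{ij}}, the matrix of multiplication by U_{ij} in the chosen basis. Then Ψ(1_N) = 1_{dN}, Ψ(UV) = Ψ(U)Ψ(V) for all U, V ∈ K^{N×N}, and if U is unitary (i.e., U†U = 1_N, where U† is the conjugate transpose, conjugation being complex conjugation on K ⊆ ℂ), then Ψ(U) is orthogonal: Ψ(U)ᵀΨ(U) = 1_{dN}. In particular Ψ restricts to a group homomorphism from the unitary group U(N, K) to the orthogonal group O(dN, ℚ). -/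
open Matrix

section aux
variable {d : ℕ} [NeZero d] {K : IntermediateField ℚ ℂ} (B : Module.Basis (Fin d) ℚ K) (z : K)

lemma aux_zB (hz : ∀ i : Fin d, B i = z ^ (i : ℕ)) (hzd : z ^ d = -1) (a : Fin d) :
    z * B a = (if (a : ℕ) + 1 = d then (-1 : ℚ) else 1) • B (a + 1) := by
  have hd : 0 < d := Nat.pos_of_ne_zero (NeZero.ne d)
  by_cases h : (a : ℕ) + 1 = d
  · have h1 : a + 1 = (0 : Fin d) := by
      apply Fin.ext
      simp [Fin.add_def, h]
    rw [if_pos h, h1, hz a, ← pow_succ', h, hzd, hz 0]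
    norm_num
  · have hlt : (a : ℕ) + 1 < d := lt_of_le_of_ne (Nat.succ_le_of_lt a.2) h
    have h1 : ((a + 1 : Fin d) : ℕ) = (a : ℕ) + 1 := by
      simp [Fin.add_def, Nat.mod_eq_of_lt hlt]
    rw [if_neg h, one_smul, hz a, hz (a+1), h1, ← pow_succ']
end aux

section aux2
variable {d : ℕ} [NeZero d] {K : IntermediateField ℚ ℂ} (B : Module.Basis (Fin d) ℚ K) (z : K)
  (hz : ∀ i : Fin d, B i = z ^ (i : ℕ)) (hzd : z ^ d = -1)
include hz hzd

lemma aux_entry (m a : Fin d) :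
    Algebra.leftMulMatrix B z m a
      = (if (a : ℕ) + 1 = d then (-1 : ℚ) else 1) * (if m = a + 1 then 1 else 0) := by
  rw [Algebra.leftMulMatrix_eq_repr_mul, aux_zB B z hz hzd a, _root_.map_smul, Finsupp.smul_apply,
    B.repr_self, Finsupp.single_apply, smul_eq_mul]
  simp [eq_comm]

lemma aux_orth : (Algebra.leftMulMatrix B z)ᵀ * Algebra.leftMulMatrix B z = 1 := by
  ext a b
  simp only [Matrix.mul_apply, Matrix.transpose_apply, aux_entry B z hz hzd, Matrix.one_apply,
    mul_ite, mul_one, mul_zero, ite_mul, zero_mul]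
  rw [Finset.sum_ite_eq' Finset.univ (b + 1)]
  simp only [Finset.mem_univ, if_true]
  by_cases hab : a = b
  · subst hab
    split_ifs <;> simp_all
  · have h1 : ¬ (b + 1 = a + 1) := fun h => hab (add_right_cancel h).symm
    simp [h1, hab]

omit hz in
lemma aux_zne : z ≠ 0 := by
  intro h
  have hd : 0 < d := Nat.pos_of_ne_zero (NeZero.ne d)
  rw [h, zero_pow hd.ne'] at hzd
  simp at hzd

lemma aux_Tz : (Algebra.leftMulMatrix B z)ᵀ = Algebra.leftMulMatrix B z⁻¹ := by
  have h1 : Algebra.leftMulMatrix B z * Algebra.leftMulMatrix B z⁻¹ = 1 := by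
    rw [← _root_.map_mul, mul_inv_cancel₀ (aux_zne z hzd), _root_.map_one]
  calc (Algebra.leftMulMatrix B z)ᵀ
      = (Algebra.leftMulMatrix B z)ᵀ * (Algebra.leftMulMatrix B z * Algebra.leftMulMatrix B z⁻¹) := by
        rw [h1, mul_one]
    _ = ((Algebra.leftMulMatrix B z)ᵀ * Algebra.leftMulMatrix B z) * Algebra.leftMulMatrix B z⁻¹ := by
        rw [mul_assoc]
    _ = Algebra.leftMulMatrix B z⁻¹ := by rw [aux_orth B z hz hzd, one_mul]

lemma aux_Tx (x : K) :
    (Algebra.leftMulMatrix B x)ᵀ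
      = Algebra.leftMulMatrix B (∑ i : Fin d, B.repr x i • z⁻¹ ^ (i : ℕ)) := by
  conv_lhs => rw [← B.sum_repr x]
  simp only [hz, map_sum, _root_.map_smul, map_pow, Matrix.transpose_sum, Matrix.transpose_smul,
    Matrix.transpose_pow, aux_Tz B z hz hzd]
end aux2

section aux4
variable {d : ℕ} {K : IntermediateField ℚ ℂ} (B : Module.Basis (Fin d) ℚ K) (z : K)
  (hz : ∀ i : Fin d, B i = z ^ (i : ℕ)) (hc : starRingEnd ℂ (z : ℂ) = ((z : ℂ))⁻¹)
include hz hc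

lemma aux_conj (x : K) :
    ((∑ i : Fin d, B.repr x i • z⁻¹ ^ (i : ℕ) : K) : ℂ) = starRingEnd ℂ (x : ℂ) := by
  conv_rhs => rw [← B.sum_repr x]
  simp only [hz]
  push_cast
  simp [Rat.smul_def, hc, inv_pow, IntermediateField.coe_inv]
end aux4

set_option synthInstance.maxHeartbeats 400000 in
theorem stmt_2 (k : ℕ) (hk : 1 ≤ k) (ζ : ℂ)
    (hζ : ζ = Complex.exp (2 * Real.pi * Complex.I / (2 ^ k)))
    (K : IntermediateField ℚ ℂ) (hK : K = IntermediateField.adjoin ℚ {ζ})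
    (d : ℕ) (hd : d = 2 ^ (k - 1))
    (B : Module.Basis (Fin d) ℚ K) (hB : ∀ i : Fin d, (B i : ℂ) = ζ ^ (i : ℕ))
    (N : ℕ) (hN : 1 ≤ N) :
    let M : K → Matrix (Fin d) (Fin d) ℚ :=
      fun a => LinearMap.toMatrix B B (Algebra.lmul ℚ K a)
    let Ψ : Matrix (Fin N) (Fin N) K → Matrix (Fin N × Fin d) (Fin N × Fin d) ℚ :=
      fun U => Matrix.of fun p q => M (U p.1 q.1) p.2 q.2
    Ψ 1 = 1 ∧
    (∀ U V : Matrix (Fin N) (Fin N) K, Ψ (U * V) = Ψ U * Ψ V) ∧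
    (∀ U : Matrix (Fin N) (Fin N) K,
      (∀ i j, (∑ l, starRingEnd ℂ ((U l i : K) : ℂ) * ((U l j : K) : ℂ))
          = if i = j then 1 else 0) →
      (Ψ U)ᵀ * Ψ U = 1) := by
  intro M Ψ
  haveI : NeZero d := ⟨by rw [hd]; positivity⟩
  have hM : ∀ a : K, M a = Algebra.leftMulMatrix B a :=
    fun a => (Algebra.leftMulMatrix_apply B a).symm
  -- ζ and z facts
  have hζK : ζ ∈ K := by
    rw [hK]; exact IntermediateField.subset_adjoin ℚ {ζ} rfl
  set z : K := ⟨ζ, hζK⟩ with hzdef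
  have hzc : (z : ℂ) = ζ := rfl
  have hz : ∀ i : Fin d, B i = z ^ (i : ℕ) := by
    intro i
    apply Subtype.coe_injective
    push_cast
    rw [hB i]
  have hk1 : k - 1 + 1 = k := Nat.succ_pred_eq_of_pos hk
  have h2 : (2:ℂ)^k = 2^(k-1) * 2 := by rw [← pow_succ, hk1]
  have hne : (2:ℂ)^(k-1) ≠ 0 := pow_ne_zero _ two_ne_zero
  have hζd : ζ ^ d = -1 := by
    rw [hζ, ← Complex.exp_nat_mul]
    have harg : (d:ℂ) * (2 * Real.pi * Complex.I / 2^k) = Real.pi * Complex.I := by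
      rw [hd]; push_cast; rw [h2]; field_simp
    rw [harg, Complex.exp_pi_mul_I]
  have hzd : z ^ d = -1 := by
    apply Subtype.coe_injective
    push_cast
    exact hζd
  have hc : starRingEnd ℂ (z : ℂ) = ((z : ℂ))⁻¹ := by
    rw [hzc, hζ, ← Complex.exp_conj, ← Complex.exp_neg]
    congr 1
    simp [map_div₀, Complex.conj_ofReal, map_ofNat]
    ring
  refine ⟨?_, ?_, ?_⟩
  · -- Ψ 1 = 1
    ext ⟨p1, p2⟩ ⟨q1, q2⟩
    show M ((1 : Matrix (Fin N) (Fin N) K) p1 q1) p2 q2 = _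
    rw [hM]
    by_cases h : p1 = q1
    · subst h
      simp [Matrix.one_apply, Prod.ext_iff]
    · simp [Matrix.one_apply, Prod.ext_iff, h]
  · -- multiplicativity
    intro U V
    ext ⟨p1, p2⟩ ⟨q1, q2⟩
    show M ((U * V) p1 q1) p2 q2 = ∑ r : Fin N × Fin d, Ψ U (p1, p2) r * Ψ V r (q1, q2)
    rw [hM, Matrix.mul_apply, map_sum, Matrix.sum_apply]
    rw [Fintype.sum_prod_type]
    refine Finset.sum_congr rfl fun l _ => ?_
    rw [_root_.map_mul, Matrix.mul_apply]
    refine Finset.sum_congr rfl fun m _ => ?_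
    show _ = M (U p1 l) p2 m * M (V l q1) m q2
    rw [hM, hM]
  · -- orthogonality
    intro U hU
    have key : ∀ i j : Fin N,
        (∑ l, (∑ t : Fin d, B.repr (U l i) t • z⁻¹ ^ (t : ℕ)) * U l j)
          = if i = j then (1 : K) else 0 := by
      intro i j
      have hite : ((if i = j then (1:K) else 0 : K) : ℂ) = if i = j then 1 else 0 := by
        split_ifs <;> simp
      apply Subtype.coe_injective
      beta_reduce
      rw [hite, AddSubmonoidClass.coe_finset_sum, ← hU i j]
      exact Finset.sum_congr rfl fun l _ => by
        rw [MulMemClass.coe_mul, aux_conj B z hz hc]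
    ext ⟨p1, p2⟩ ⟨q1, q2⟩
    show (∑ r : Fin N × Fin d, Ψ U r (p1, p2) * Ψ U r (q1, q2)) = _
    have step1 : (∑ r : Fin N × Fin d, Ψ U r (p1, p2) * Ψ U r (q1, q2))
        = ∑ l : Fin N,
            ((Algebra.leftMulMatrix B (U l p1))ᵀ * Algebra.leftMulMatrix B (U l q1)) p2 q2 := by
      rw [Fintype.sum_prod_type]
      refine Finset.sum_congr rfl fun l _ => ?_
      rw [Matrix.mul_apply]
      refine Finset.sum_congr rfl fun m _ => ?_
      show M (U l p1) m p2 * M (U l q1) m q2 = _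
      rw [hM, hM, Matrix.transpose_apply]
    rw [step1]
    have step2 : ∀ l : Fin N,
        ((Algebra.leftMulMatrix B (U l p1))ᵀ * Algebra.leftMulMatrix B (U l q1))
          = Algebra.leftMulMatrix B ((∑ t : Fin d, B.repr (U l p1) t • z⁻¹ ^ (t : ℕ)) * U l q1) :=
      fun l => by rw [aux_Tx B z hz hzd, _root_.map_mul]
    simp only [step2]
    rw [← Matrix.sum_apply]
    rw [← map_sum, key p1 q1]
    by_cases h : p1 = q1
    · subst h
      simp [Matrix.one_apply, Prod.ext_iff]
    · simp [Matrix.one_apply, Prod.ext_iff, h]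
end

section
/- Let n ≥ 1, let U be a unitary 2^n × 2^n complex matrix with Pauli coefficients a_x = 2^{−n} Tr(P_x U), and let φ ∈ ℂ^{2^n} be a unit vector. Define ψ' := ∑_{x ∈ ({0,1}²)^n} a_x e_x ⊗ P_x φ ∈ ℂ^{4^n} ⊗ ℂ^{2^n}, where (e_x) is the standard basis of ℂ^{4^n} indexed by x. For y ∈ ({0,1}²)^n let y_H := H^{⊗2n} e_y where H = (1/√2)[[1,1],[1,−1]] is the Hadamard matrix. Then for every y, ‖(|y_H⟩⟨y_H| ⊗ I_{2^n}) ψ'‖² = 2^{−2n}. -/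
open Matrix

/-- The single-qubit Pauli matrices, indexed by pairs of bits:
`σ₀₀ = I`, `σ₀₁ = X`, `σ₁₀ = Y`, `σ₁₁ = Z`. -/
noncomputable def pauli : Bool × Bool → Matrix (Fin 2) (Fin 2) ℂ
  | (false, false) => !![1, 0; 0, 1]
  | (false, true)  => !![0, 1; 1, 0]
  | (true, false)  => !![0, -Complex.I; Complex.I, 0]
  | (true, true)   => !![1, 0; 0, -1]

/-- The `n`-fold Kronecker product `σ_{x 0} ⊗ ⋯ ⊗ σ_{x (n-1)}`. -/
noncomputable def PauliTensor (n : ℕ) (x : Fin n → Bool × Bool) :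
    Matrix (Fin n → Fin 2) (Fin n → Fin 2) ℂ :=
  Matrix.of fun i j => ∏ t, pauli (x t) (i t) (j t)

/-- Entry of the Hadamard matrix `H = (1/√2)[[1,1],[1,−1]]`, rows/columns indexed by bits. -/
noncomputable def hadEntry (b c : Bool) : ℂ :=
  (Real.sqrt 2 : ℂ)⁻¹ * (if b && c then -1 else 1)

lemma had2 : ((Real.sqrt 2 : ℂ))⁻¹ * (Real.sqrt 2 : ℂ)⁻¹ = 2⁻¹ := by
  rw [← mul_inv, ← Complex.ofReal_mul, Real.mul_self_sqrt (by norm_num : (0:ℝ) ≤ 2)]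
  norm_num

lemma had_mul (b1 c1 b2 c2 : Bool) : hadEntry b1 c1 * hadEntry b2 c2 =
    2⁻¹ * ((if b1 && c1 then (-1:ℂ) else 1) * (if b2 && c2 then -1 else 1)) := by
  unfold hadEntry
  rw [mul_mul_mul_comm, had2]

lemma had_conj (b c : Bool) : starRingEnd ℂ (hadEntry b c) = hadEntry b c := by
  unfold hadEntry
  rw [_root_.map_mul, map_inv₀, Complex.conj_ofReal, apply_ite (starRingEnd ℂ)]
  simp

lemma had_norm (b c : Bool) : ‖hadEntry b c‖ = (Real.sqrt 2)⁻¹ := by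
  unfold hadEntry
  rw [norm_mul, apply_ite norm]
  simp [Real.sqrt_nonneg]

lemma pauli_herm (b : Bool × Bool) (i j : Fin 2) :
    starRingEnd ℂ (pauli b j i) = pauli b i j := by
  rcases b with ⟨b1, b2⟩
  fin_cases i <;> fin_cases j <;> rcases b1 <;> rcases b2 <;> simp [pauli]

lemma pauli_sq (b : Bool × Bool) (i j : Fin 2) :
    ∑ k, pauli b i k * pauli b k j = if i = j then 1 else 0 := by
  rcases b with ⟨b1, b2⟩
  fin_cases i <;> fin_cases j <;> rcases b1 <;> rcases b2 <;>
    simp [pauli, Fin.sum_univ_two, Complex.I_mul_I]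

set_option maxHeartbeats 1000000 in
lemma key1 (c : Bool × Bool) (i j k l : Fin 2) :
    ∑ b : Bool × Bool, hadEntry b.1 c.1 * hadEntry b.2 c.2 * (pauli b l k * pauli b i j)
      = pauli (c.2, c.1) i k * pauli (c.2, c.1) l j := by
  rw [Fintype.sum_prod_type]
  simp only [Fintype.sum_bool, had_mul]
  rcases c with ⟨c1, c2⟩
  rcases c1 <;> rcases c2 <;> fin_cases i <;> fin_cases j <;> fin_cases k <;> fin_cases l <;>
    norm_num [pauli]

lemma PT_herm (n : ℕ) (w : Fin n → Bool × Bool) : (PauliTensor n w)ᴴ = PauliTensor n w := by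
  ext i j
  simp only [conjTranspose_apply, PauliTensor, of_apply]
  calc (star (∏ t, pauli (w t) (j t) (i t)) : ℂ)
      = ∏ t, starRingEnd ℂ (pauli (w t) (j t) (i t)) := map_prod (starRingEnd ℂ) _ _
    _ = ∏ t, pauli (w t) (i t) (j t) := Finset.prod_congr rfl fun t _ => pauli_herm _ _ _

lemma PT_sq (n : ℕ) (w : Fin n → Bool × Bool) :
    PauliTensor n w * PauliTensor n w = 1 := by
  ext i j
  rw [mul_apply]
  simp only [PauliTensor, of_apply]
  have h1 : ∀ k : Fin n → Fin 2,
      (∏ t, pauli (w t) (i t) (k t)) * ∏ t, pauli (w t) (k t) (j t)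
      = ∏ t, (pauli (w t) (i t) (k t) * pauli (w t) (k t) (j t)) :=
    fun k => (Finset.prod_mul_distrib).symm
  simp only [h1]
  rw [← Fintype.prod_sum fun t (m : Fin 2) => pauli (w t) (i t) m * pauli (w t) m (j t)]
  simp only [pauli_sq]
  by_cases h : i = j
  · subst h; simp
  · have : ∃ t, i t ≠ j t := by
      by_contra hc
      push_neg at hc
      exact h (funext hc)
    obtain ⟨t, ht⟩ := this
    rw [Finset.prod_eq_zero (Finset.mem_univ t) (by simp [ht])]
    simp [one_apply, h]

lemma mulVec_norm_sq {m : Type*} [Fintype m] [DecidableEq m] (A : Matrix m m ℂ)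
    (hA : Aᴴ * A = 1) (v : m → ℂ) :
    ∑ j, ‖A.mulVec v j‖ ^ 2 = ∑ j, ‖v j‖ ^ 2 := by
  have key : ∀ w : m → ℂ, ((∑ j, ‖w j‖ ^ 2 : ℝ) : ℂ) = star w ⬝ᵥ w := by
    intro w
    push_cast
    refine Finset.sum_congr rfl fun x _ => ?_
    rw [Pi.star_apply, Complex.star_def, ← Complex.normSq_eq_conj_mul_self,
      Complex.normSq_eq_norm_sq]
    push_cast
    ring
  have h2 : star (A.mulVec v) ⬝ᵥ A.mulVec v = star v ⬝ᵥ v := by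
    rw [star_mulVec, dotProduct_mulVec, vecMul_vecMul, hA, vecMul_one]
  exact_mod_cast (key _).trans (h2.trans (key v).symm)

lemma main_mat (n : ℕ) (U : Matrix (Fin n → Fin 2) (Fin n → Fin 2) ℂ)
    (y : Fin n → Bool × Bool) (i j : Fin n → Fin 2) :
    ∑ x : Fin n → Bool × Bool,
      (∏ t, hadEntry (x t).1 (y t).1 * hadEntry (x t).2 (y t).2) *
        (((2:ℂ)^n)⁻¹ * (PauliTensor n x * U).trace) * PauliTensor n x i j
    = ((2:ℂ)^n)⁻¹ * (PauliTensor n (fun t => ((y t).2, (y t).1)) * U *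
        PauliTensor n (fun t => ((y t).2, (y t).1))) i j := by
  set w : Fin n → Bool × Bool := fun t => ((y t).2, (y t).1) with hw
  have inner : ∀ l k : Fin n → Fin 2,
      (∑ x : Fin n → Bool × Bool,
        (∏ t, hadEntry (x t).1 (y t).1 * hadEntry (x t).2 (y t).2) *
          (PauliTensor n x l k * PauliTensor n x i j))
      = PauliTensor n w i k * PauliTensor n w l j := by
    intro l k
    have h1 : ∀ x : Fin n → Bool × Bool,
        (∏ t, hadEntry (x t).1 (y t).1 * hadEntry (x t).2 (y t).2) *
          (PauliTensor n x l k * PauliTensor n x i j)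
        = ∏ t, (hadEntry (x t).1 (y t).1 * hadEntry (x t).2 (y t).2 *
            (pauli (x t) (l t) (k t) * pauli (x t) (i t) (j t))) := by
      intro x
      simp only [PauliTensor, of_apply, ← Finset.prod_mul_distrib]
    simp only [h1]
    rw [← Fintype.prod_sum fun t (b : Bool × Bool) =>
        hadEntry b.1 (y t).1 * hadEntry b.2 (y t).2 * (pauli b (l t) (k t) * pauli b (i t) (j t))]
    have h2 : PauliTensor n w i k * PauliTensor n w l j
        = ∏ t, (pauli (w t) (i t) (k t) * pauli (w t) (l t) (j t)) := by
      simp only [PauliTensor, of_apply, Finset.prod_mul_distrib]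
    rw [h2]
    exact Finset.prod_congr rfl fun t _ => key1 (y t) (i t) (j t) (k t) (l t)
  have expand : ∀ x : Fin n → Bool × Bool,
      (∏ t, hadEntry (x t).1 (y t).1 * hadEntry (x t).2 (y t).2) *
        (((2:ℂ)^n)⁻¹ * (PauliTensor n x * U).trace) * PauliTensor n x i j
      = ∑ l, ∑ k, ((2:ℂ)^n)⁻¹ * (U k l *
          ((∏ t, hadEntry (x t).1 (y t).1 * hadEntry (x t).2 (y t).2) *
            (PauliTensor n x l k * PauliTensor n x i j))) := by
    intro x
    rw [Matrix.trace]
    simp only [diag_apply, mul_apply, Finset.mul_sum, Finset.sum_mul]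
    refine Finset.sum_congr rfl fun l _ => Finset.sum_congr rfl fun k _ => ?_
    ring
  simp only [expand]
  rw [Finset.sum_comm]
  have swap2 : ∀ l, (∑ x : Fin n → Bool × Bool, ∑ k, ((2:ℂ)^n)⁻¹ * (U k l *
          ((∏ t, hadEntry (x t).1 (y t).1 * hadEntry (x t).2 (y t).2) *
            (PauliTensor n x l k * PauliTensor n x i j))))
      = ∑ k, ((2:ℂ)^n)⁻¹ * (U k l * (PauliTensor n w i k * PauliTensor n w l j)) := by
    intro l
    rw [Finset.sum_comm]
    refine Finset.sum_congr rfl fun k _ => ?_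
    rw [← inner l k, Finset.mul_sum, Finset.mul_sum]
  simp only [swap2]
  rw [mul_apply, Finset.mul_sum]
  refine Finset.sum_congr rfl fun l _ => ?_
  rw [mul_apply, Finset.sum_mul, Finset.mul_sum]
  refine Finset.sum_congr rfl fun k _ => ?_
  ring

set_option maxHeartbeats 800000 in
theorem stmt_8 (n : ℕ) (hn : 1 ≤ n)
    (U : Matrix (Fin n → Fin 2) (Fin n → Fin 2) ℂ) (hU : Uᴴ * U = 1)
    (φ : EuclideanSpace ℂ (Fin n → Fin 2)) (hφ : ‖φ‖ = 1)
    (y : Fin n → Bool × Bool) :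
    let a : (Fin n → Bool × Bool) → ℂ :=
      fun x => ((2 : ℂ) ^ n)⁻¹ * (PauliTensor n x * U).trace
    -- ψ' = ∑ₓ aₓ eₓ ⊗ Pₓ φ
    let ψ' : EuclideanSpace ℂ ((Fin n → Bool × Bool) × (Fin n → Fin 2)) :=
      (WithLp.equiv 2 _).symm fun p =>
        a p.1 * (PauliTensor n p.1).mulVec (WithLp.equiv 2 _ φ) p.2
    -- y_H = H^{⊗2n} e_y
    let yH : (Fin n → Bool × Bool) → ℂ :=
      fun x => ∏ j, hadEntry (x j).1 (y j).1 * hadEntry (x j).2 (y j).2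
    -- (|y_H⟩⟨y_H| ⊗ I) ψ'
    let projected : EuclideanSpace ℂ ((Fin n → Bool × Bool) × (Fin n → Fin 2)) :=
      (WithLp.equiv 2 _).symm fun p =>
        yH p.1 * ∑ x, starRingEnd ℂ (yH x) * (WithLp.equiv 2 _ ψ') (x, p.2)
    ‖projected‖ ^ 2 = ((2 : ℝ) ^ (2 * n))⁻¹ := by
  intro a ψ' yH projected
  set w : Fin n → Bool × Bool := fun t => ((y t).2, (y t).1) with hwdef
  set M : Matrix (Fin n → Fin 2) (Fin n → Fin 2) ℂ :=
    PauliTensor n w * U * PauliTensor n w with hMdef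
  have hM : Mᴴ * M = 1 := by
    rw [hMdef, conjTranspose_mul, conjTranspose_mul, PT_herm]
    have hsq := PT_sq n w
    calc PauliTensor n w * (Uᴴ * PauliTensor n w) * (PauliTensor n w * U * PauliTensor n w)
        = PauliTensor n w * Uᴴ * (PauliTensor n w * PauliTensor n w) * (U * PauliTensor n w) := by
          noncomm_ring
      _ = PauliTensor n w * (Uᴴ * U) * PauliTensor n w := by rw [hsq]; noncomm_ring
      _ = PauliTensor n w * PauliTensor n w := by rw [hU]; noncomm_ring
      _ = 1 := hsq
  -- the inner vector
  set v : (Fin n → Fin 2) → ℂ :=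
    fun jj => ∑ x, starRingEnd ℂ (yH x) * (WithLp.equiv 2 _ ψ') (x, jj) with hvdef
  have hproj : ∀ p : (Fin n → Bool × Bool) × (Fin n → Fin 2),
      projected p = yH p.1 * v p.2 := by
    intro p; rfl
  have hyHconj : ∀ x, starRingEnd ℂ (yH x) = yH x := by
    intro x
    rw [show yH x = ∏ j, hadEntry (x j).1 (y j).1 * hadEntry (x j).2 (y j).2 from rfl,
      map_prod]
    exact Finset.prod_congr rfl fun t _ => by rw [_root_.map_mul, had_conj, had_conj]
  have hv : ∀ jj, v jj = ((2:ℂ)^n)⁻¹ * M.mulVec (fun m => φ m) jj := by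
    intro jj
    rw [hvdef]
    calc (∑ x, starRingEnd ℂ (yH x) * (WithLp.equiv 2 _ ψ') (x, jj))
        = ∑ x, ∑ m, yH x * a x * PauliTensor n x jj m * φ m := by
          refine Finset.sum_congr rfl fun x _ => ?_
          rw [hyHconj]
          show yH x * (a x * (PauliTensor n x).mulVec (fun m => φ m) jj) = _
          rw [Matrix.mulVec, dotProduct, Finset.mul_sum, Finset.mul_sum]
          exact Finset.sum_congr rfl fun m _ => by ring
      _ = ∑ m, (∑ x, yH x * a x * PauliTensor n x jj m) * φ m := by
          rw [Finset.sum_comm]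
          exact Finset.sum_congr rfl fun m _ => (Finset.sum_mul _ _ _).symm
      _ = ∑ m, (((2:ℂ)^n)⁻¹ * M jj m) * φ m := by
          refine Finset.sum_congr rfl fun m _ => ?_
          congr 1
          exact main_mat n U y jj m
      _ = ((2:ℂ)^n)⁻¹ * M.mulVec (fun m => φ m) jj := by
          rw [Matrix.mulVec, dotProduct, Finset.mul_sum]
          exact Finset.sum_congr rfl fun m _ => by ring
  -- norms
  have hnormsq : ‖projected‖ ^ 2 = ∑ p, ‖projected p‖ ^ 2 := by
    rw [EuclideanSpace.norm_eq, Real.sq_sqrt]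
    positivity
  rw [hnormsq]
  have hsplit : (∑ p : (Fin n → Bool × Bool) × (Fin n → Fin 2), ‖projected p‖ ^ 2)
      = (∑ x, ‖yH x‖ ^ 2) * (∑ jj, ‖v jj‖ ^ 2) := by
    rw [Fintype.sum_prod_type, Finset.sum_mul_sum]
    refine Finset.sum_congr rfl fun x _ => Finset.sum_congr rfl fun jj _ => ?_
    rw [hproj (x, jj), norm_mul, mul_pow]
  rw [hsplit]
  have hyHnorm : ∀ x, ‖yH x‖ ^ 2 = ((4:ℝ)^n)⁻¹ := by
    intro x
    rw [show yH x = ∏ j, hadEntry (x j).1 (y j).1 * hadEntry (x j).2 (y j).2 from rfl,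
      norm_prod]
    have : ∀ t ∈ Finset.univ, ‖hadEntry (x t).1 (y t).1 * hadEntry (x t).2 (y t).2‖
        = (2:ℝ)⁻¹ := by
      intro t _
      rw [norm_mul, had_norm, had_norm, ← mul_inv,
        Real.mul_self_sqrt (by norm_num : (0:ℝ) ≤ 2)]
    rw [Finset.prod_congr rfl this, Finset.prod_const, Finset.card_univ, Fintype.card_fin,
      ← pow_mul, inv_pow, mul_comm n 2,
      show ((2:ℝ))^(2*n) = 4^n from by rw [pow_mul]; norm_num]
  have hsum1 : (∑ x : Fin n → Bool × Bool, ‖yH x‖ ^ 2) = 1 := by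
    rw [Finset.sum_congr rfl fun x _ => hyHnorm x, Finset.sum_const, Finset.card_univ,
      Fintype.card_fun]
    simp only [Fintype.card_prod, Fintype.card_bool, Fintype.card_fin, nsmul_eq_mul]
    push_cast
    field_simp
  have hφsum : (∑ jj, ‖φ jj‖ ^ 2) = 1 := by
    have h := EuclideanSpace.norm_eq φ
    rw [hφ] at h
    exact Real.sqrt_eq_one.mp h.symm
  have hvsum : (∑ jj, ‖v jj‖ ^ 2) = ((2:ℝ) ^ (2*n))⁻¹ := by
    have : ∀ jj, ‖v jj‖ ^ 2 = (((2:ℝ)^n)⁻¹)^2 * ‖M.mulVec (fun m => φ m) jj‖ ^ 2 := by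
      intro jj
      rw [hv jj, norm_mul, mul_pow]
      norm_num
    rw [Finset.sum_congr rfl fun jj _ => this jj, ← Finset.mul_sum,
      mulVec_norm_sq M hM, hφsum, mul_one, ← inv_pow, ← pow_mul, ← inv_pow, mul_comm n 2]
  rw [hsum1, hvsum, one_mul]
end

section
/- (Oblivious amplitude amplification) Let H_A and H_B be finite-dimensional complex Hilbert spaces, let e ∈ H_A be a unit vector, let U be a unitary operator on H_A ⊗ H_B, let V be a unitary operator on H_B, and let θ ∈ (0, π/2). Suppose that for every ψ ∈ H_B there is a vector Φ_ψ ∈ H_A ⊗ H_B with Π Φ_ψ = 0 and U(e ⊗ ψ) = sin(θ)·(e ⊗ Vψ) + cos(θ)·Φ_ψ, where Π := |e⟩⟨e| ⊗ I. Let R := 2Π − I and S := −U R U† R. Then for every natural number ℓ and every ψ ∈ H_B, S^ℓ U (e ⊗ ψ) = sin((2ℓ+1)θ)·(e ⊗ Vψ) + cos((2ℓ+1)θ)·Φ_ψ. -/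
open Matrix

/-- Oblivious amplitude amplification (Berry–Childs–Cleve–Kothari–Somma). -/
theorem stmt_9 (p q : ℕ) (hp : 1 ≤ p) (hq : 1 ≤ q)
    (e : EuclideanSpace ℂ (Fin p)) (he : ‖e‖ = 1)
    (U : Matrix (Fin p × Fin q) (Fin p × Fin q) ℂ)
    (hU : U ∈ Matrix.unitaryGroup (Fin p × Fin q) ℂ)
    (V : Matrix (Fin q) (Fin q) ℂ) (hV : V ∈ Matrix.unitaryGroup (Fin q) ℂ)
    (θ : ℝ) (hθ : θ ∈ Set.Ioo 0 (Real.pi / 2))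
    (Φ : (Fin q → ℂ) → (Fin p × Fin q → ℂ)) :
    let eF : Fin p → ℂ := WithLp.equiv 2 _ e
    -- Π = |e⟩⟨e| ⊗ I
    let Pi' : Matrix (Fin p × Fin q) (Fin p × Fin q) ℂ :=
      Matrix.of fun r s => eF r.1 * starRingEnd ℂ (eF s.1) * (if r.2 = s.2 then 1 else 0)
    -- R = 2Π − I,  S = −U R U† R
    let R : Matrix (Fin p × Fin q) (Fin p × Fin q) ℂ := (2 : ℂ) • Pi' - 1
    let S : Matrix (Fin p × Fin q) (Fin p × Fin q) ℂ := -(U * R * Uᴴ * R)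
    (∀ ψ, Pi'.mulVec (Φ ψ) = 0) →
    (∀ ψ : Fin q → ℂ,
      U.mulVec (fun r => eF r.1 * ψ r.2)
        = (Real.sin θ : ℂ) • (fun r : Fin p × Fin q => eF r.1 * V.mulVec ψ r.2)
          + (Real.cos θ : ℂ) • Φ ψ) →
    ∀ (ℓ : ℕ) (ψ : Fin q → ℂ),
      (S ^ ℓ * U).mulVec (fun r => eF r.1 * ψ r.2)
        = (Real.sin ((2 * (ℓ : ℝ) + 1) * θ) : ℂ)
            • (fun r : Fin p × Fin q => eF r.1 * V.mulVec ψ r.2)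
          + (Real.cos ((2 * (ℓ : ℝ) + 1) * θ) : ℂ) • Φ ψ := by
  intro eF Pi' R S hΦ hUe ℓ ψ
  have hPidef : Pi' = Matrix.of fun r s : Fin p × Fin q =>
      eF r.1 * starRingEnd ℂ (eF s.1) * (if r.2 = s.2 then 1 else 0) := rfl
  set c : ℂ := (Real.sin θ : ℂ) with hc
  set d : ℂ := (Real.cos θ : ℂ) with hdc
  have hcosR : Real.cos θ ≠ 0 := by
    have := Real.cos_pos_of_mem_Ioo ⟨by nlinarith [Real.pi_pos, hθ.1], hθ.2⟩
    exact ne_of_gt this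
  have hd : d ≠ 0 := by simpa [hdc] using Complex.ofReal_ne_zero.mpr hcosR
  have hcd : c * c + d * d = 1 := by
    rw [hc, hdc]
    norm_cast
    have := Real.sin_sq_add_cos_sq θ
    nlinarith [this]
  have hnorm : ∑ i, starRingEnd ℂ (eF i) * eF i = 1 := by
    have h : inner ℂ e e = (1 : ℂ) := by rw [inner_self_eq_norm_sq_to_K, he]; simp
    rw [← h, PiLp.inner_apply]
    refine Finset.sum_congr rfl fun i _ => ?_
    simp [eF, RCLike.inner_apply, mul_comm]
    exact RCLike.mul_conj _
  -- Π fixes vectors of the form e ⊗ χ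
  have hPiG : ∀ χ : Fin q → ℂ, Pi'.mulVec (fun r => eF r.1 * χ r.2) = fun r => eF r.1 * χ r.2 := by
    intro χ; funext r
    have hterm : ∀ s1 : Fin p, eF r.1 * starRingEnd ℂ (eF s1) * (eF s1 * χ r.2)
        = (starRingEnd ℂ (eF s1) * eF s1) * (eF r.1 * χ r.2) := fun _ => by ring
    simp only [Matrix.mulVec, dotProduct, hPidef, Matrix.of_apply, Fintype.sum_prod_type,
      mul_ite, ite_mul, mul_one, mul_zero, zero_mul, Finset.sum_ite_eq, Finset.mem_univ, if_true]
    rw [Finset.sum_congr rfl (fun s1 _ => hterm s1), ← Finset.sum_mul, hnorm, one_mul]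
  have hPiH : Pi'ᴴ = Pi' := by
    ext r s
    simp only [hPidef, Matrix.conjTranspose_apply, Matrix.of_apply, star_mul', starRingEnd_apply,
      star_star]
    by_cases h : r.2 = s.2
    · simp only [if_pos h, if_pos h.symm, star_one, mul_one]
      ring
    · simp only [if_neg h, if_neg (fun h' : s.2 = r.2 => h h'.symm), star_zero, mul_zero]
  -- unitarity facts
  have hUU : ∀ x : Fin p × Fin q → ℂ, U.mulVec (Uᴴ.mulVec x) = x := by
    intro x
    rw [Matrix.mulVec_mulVec, show U * Uᴴ = 1 from hU.2, Matrix.one_mulVec]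
  have hUHU : ∀ x : Fin p × Fin q → ℂ, Uᴴ.mulVec (U.mulVec x) = x := by
    intro x
    rw [Matrix.mulVec_mulVec, show Uᴴ * U = 1 from hU.1, Matrix.one_mulVec]
  have hVV : ∀ j, ∑ i, starRingEnd ℂ (V i j) * V.mulVec ψ i = ψ j := by
    intro j
    have h1 : Vᴴ.mulVec (V.mulVec ψ) = ψ := by
      rw [Matrix.mulVec_mulVec, show Vᴴ * V = 1 from hV.1, Matrix.one_mulVec]
    have h2 := congrFun h1 j
    simpa [Matrix.mulVec, dotProduct, Matrix.conjTranspose_apply] using h2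
  -- the matrix identity Π U Π = sin θ • (|e⟩⟨e| ⊗ V)
  have hPiUPi : Pi' * U * Pi'
      = c • Matrix.of (fun r s : Fin p × Fin q => eF r.1 * starRingEnd ℂ (eF s.1) * V r.2 s.2) := by
    have key : ∀ ψ₀ : Fin q → ℂ, (Pi' * U).mulVec (fun u => eF u.1 * ψ₀ u.2)
        = c • (fun r : Fin p × Fin q => eF r.1 * V.mulVec ψ₀ r.2) := by
      intro ψ₀
      rw [← Matrix.mulVec_mulVec, hUe, Matrix.mulVec_add, Matrix.mulVec_smul, Matrix.mulVec_smul,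
        hPiG, hΦ, smul_zero, add_zero]
    ext r s
    have hent : (Pi' * U * Pi') r s = ((Pi' * U).mulVec (fun u => Pi' u s)) r := by
      simp [Matrix.mul_apply, Matrix.mulVec, dotProduct]
    have hcol : (fun u => Pi' u s) = starRingEnd ℂ (eF s.1) •
        (fun u : Fin p × Fin q => eF u.1 * (if u.2 = s.2 then (1:ℂ) else 0)) := by
      funext u; simp [hPidef]; ring_nf
    have k2 : (Pi' * U).mulVec (fun u : Fin p × Fin q => eF u.1 * (if u.2 = s.2 then (1:ℂ) else 0))
        = c • (fun r : Fin p × Fin q =>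
            eF r.1 * V.mulVec (fun j => if j = s.2 then (1:ℂ) else 0) r.2) := by
      have h := key (fun j => if j = s.2 then (1:ℂ) else 0); simpa using h
    have hVs : V.mulVec (fun j => if j = s.2 then (1:ℂ) else 0) r.2 = V r.2 s.2 := by
      simp [Matrix.mulVec, dotProduct]
    rw [hent, hcol, Matrix.mulVec_smul, k2]
    simp only [Pi.smul_apply, smul_eq_mul, Matrix.smul_apply, Matrix.of_apply, hVs]
    ring
  have hPiUHPi : Pi' * Uᴴ * Pi'
      = c • (Matrix.of (fun r s : Fin p × Fin q => eF r.1 * starRingEnd ℂ (eF s.1) * V r.2 s.2))ᴴ := by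
    have h1 : (Pi' * U * Pi')ᴴ = Pi' * Uᴴ * Pi' := by
      simp [Matrix.conjTranspose_mul, hPiH, Matrix.mul_assoc]
    rw [← h1, hPiUPi, Matrix.conjTranspose_smul]
    congr 1
    rw [hc, Complex.star_def, Complex.conj_ofReal]
  -- Mᴴ maps e ⊗ Vψ to e ⊗ ψ
  have hMH : (Matrix.of (fun r s : Fin p × Fin q =>
        eF r.1 * starRingEnd ℂ (eF s.1) * V r.2 s.2))ᴴ.mulVec
        (fun r : Fin p × Fin q => eF r.1 * V.mulVec ψ r.2)
      = fun r : Fin p × Fin q => eF r.1 * ψ r.2 := by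
    funext r
    have hterm : ∀ s1 : Fin p, ∀ s2 : Fin q,
        starRingEnd ℂ (eF s1 * starRingEnd ℂ (eF r.1) * V s2 r.2) * (eF s1 * V.mulVec ψ s2)
        = (starRingEnd ℂ (eF s1) * eF s1) * (eF r.1 * (starRingEnd ℂ (V s2 r.2) * V.mulVec ψ s2)) := by
      intro s1 s2
      simp only [_root_.map_mul, Complex.conj_conj]
      ring
    simp only [Matrix.mulVec, dotProduct, Matrix.conjTranspose_apply, Matrix.of_apply,
      Fintype.sum_prod_type]
    calc ∑ s1, ∑ s2, starRingEnd ℂ (eF s1 * starRingEnd ℂ (eF r.1) * V s2 r.2) * (eF s1 * V.mulVec ψ s2)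
        = ∑ s1, (starRingEnd ℂ (eF s1) * eF s1) *
            (eF r.1 * ∑ s2, starRingEnd ℂ (V s2 r.2) * V.mulVec ψ s2) := by
          refine Finset.sum_congr rfl fun s1 _ => ?_
          rw [Finset.mul_sum, Finset.mul_sum]
          exact Finset.sum_congr rfl fun s2 _ => hterm s1 s2
      _ = eF r.1 * ψ r.2 := by
          rw [hVV r.2, ← Finset.sum_mul, hnorm, one_mul]
  -- Π U† (e ⊗ Vψ) = sin θ • (e ⊗ ψ)
  have hPiUHG : Pi'.mulVec (Uᴴ.mulVec (fun r : Fin p × Fin q => eF r.1 * V.mulVec ψ r.2))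
      = c • fun r : Fin p × Fin q => eF r.1 * ψ r.2 := by
    conv_lhs => rw [← hPiG (V.mulVec ψ)]
    rw [Matrix.mulVec_mulVec, Matrix.mulVec_mulVec, hPiUHPi,
      Matrix.smul_mulVec, hMH]
  -- the auxiliary vector ξ
  set ξ : Fin p × Fin q → ℂ := d⁻¹ • (Uᴴ.mulVec (fun r : Fin p × Fin q => eF r.1 * V.mulVec ψ r.2)
      - c • fun r : Fin p × Fin q => eF r.1 * ψ r.2) with hξ
  have hUHGV : Uᴴ.mulVec (fun r : Fin p × Fin q => eF r.1 * V.mulVec ψ r.2)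
      = c • (fun r : Fin p × Fin q => eF r.1 * ψ r.2) + d • ξ := by
    rw [hξ, smul_smul, mul_inv_cancel₀ hd, one_smul]
    abel
  have hPiξ : Pi'.mulVec ξ = 0 := by
    rw [hξ, Matrix.mulVec_smul, Matrix.mulVec_sub, Matrix.mulVec_smul, hPiUHG, hPiG, sub_self,
      smul_zero]
  have hUξ : U.mulVec ξ = d • (fun r : Fin p × Fin q => eF r.1 * V.mulVec ψ r.2) - c • Φ ψ := by
    rw [hξ, Matrix.mulVec_smul, Matrix.mulVec_sub, Matrix.mulVec_smul, hUU, hUe]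
    match_scalars
    · field_simp
      linear_combination (-1 : ℂ) * hcd
    · field_simp
  have hUHΦ : Uᴴ.mulVec (Φ ψ) = d • (fun r : Fin p × Fin q => eF r.1 * ψ r.2) - c • ξ := by
    have h := congrArg (Uᴴ.mulVec) (hUe ψ)
    rw [hUHU, Matrix.mulVec_add, Matrix.mulVec_smul, Matrix.mulVec_smul, hUHGV] at h
    have h2 : d • Uᴴ.mulVec (Φ ψ) = (fun r : Fin p × Fin q => eF r.1 * ψ r.2)
        - c • (c • (fun r : Fin p × Fin q => eF r.1 * ψ r.2) + d • ξ) := by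
      rw [eq_sub_iff_add_eq, add_comm]
      exact h.symm
    have h3 : (fun r : Fin p × Fin q => eF r.1 * ψ r.2)
        - c • (c • (fun r : Fin p × Fin q => eF r.1 * ψ r.2) + d • ξ)
        = d • (d • (fun r : Fin p × Fin q => eF r.1 * ψ r.2) - c • ξ) := by
      match_scalars
      · field_simp
        linear_combination (-1 : ℂ) * hcd
      · ring
    exact smul_right_injective _ hd (h2.trans h3)
  -- basic mulVec facts about R and S
  have hR : ∀ x : Fin p × Fin q → ℂ, R.mulVec x = (2:ℂ) • Pi'.mulVec x - x := by
    intro x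
    show ((2:ℂ) • Pi' - 1).mulVec x = _
    rw [Matrix.sub_mulVec, Matrix.smul_mulVec, Matrix.one_mulVec]
  have hS : ∀ x : Fin p × Fin q → ℂ,
      S.mulVec x = -(U.mulVec (R.mulVec (Uᴴ.mulVec (R.mulVec x)))) := by
    intro x
    show (-(U * R * Uᴴ * R)).mulVec x = _
    rw [Matrix.neg_mulVec, Matrix.mulVec_mulVec, Matrix.mulVec_mulVec, Matrix.mulVec_mulVec,
      Matrix.mul_assoc, Matrix.mul_assoc]
  -- the rotation step
  have hstep : ∀ a b : ℂ,
      S.mulVec (a • (fun r : Fin p × Fin q => eF r.1 * V.mulVec ψ r.2) + b • Φ ψ)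
        = ((a * (d * d - c * c) + b * (2 * c * d)) •
            (fun r : Fin p × Fin q => eF r.1 * V.mulVec ψ r.2)
          + (a * (-2 * c * d) + b * (d * d - c * c)) • Φ ψ) := by
    intro a b
    have h1 : R.mulVec (a • (fun r : Fin p × Fin q => eF r.1 * V.mulVec ψ r.2) + b • Φ ψ)
        = a • (fun r : Fin p × Fin q => eF r.1 * V.mulVec ψ r.2) - b • Φ ψ := by
      rw [hR, Matrix.mulVec_add, Matrix.mulVec_smul, Matrix.mulVec_smul, hPiG, hΦ, smul_zero,
        add_zero]
      match_scalars <;> ring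
    have h2 : Uᴴ.mulVec (a • (fun r : Fin p × Fin q => eF r.1 * V.mulVec ψ r.2) - b • Φ ψ)
        = (a * c - b * d) • (fun r : Fin p × Fin q => eF r.1 * ψ r.2) + (a * d + b * c) • ξ := by
      rw [Matrix.mulVec_sub, Matrix.mulVec_smul, Matrix.mulVec_smul, hUHGV, hUHΦ]
      match_scalars <;> ring
    have h3 : R.mulVec ((a * c - b * d) • (fun r : Fin p × Fin q => eF r.1 * ψ r.2)
          + (a * d + b * c) • ξ)
        = (a * c - b * d) • (fun r : Fin p × Fin q => eF r.1 * ψ r.2) - (a * d + b * c) • ξ := by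
      rw [hR, Matrix.mulVec_add, Matrix.mulVec_smul, Matrix.mulVec_smul, hPiG, hPiξ, smul_zero,
        add_zero]
      match_scalars <;> ring
    have h4 : U.mulVec ((a * c - b * d) • (fun r : Fin p × Fin q => eF r.1 * ψ r.2)
          - (a * d + b * c) • ξ)
        = (a * c - b * d) • (c • (fun r : Fin p × Fin q => eF r.1 * V.mulVec ψ r.2) + d • Φ ψ)
          - (a * d + b * c) • (d • (fun r : Fin p × Fin q => eF r.1 * V.mulVec ψ r.2) - c • Φ ψ) := by
      rw [Matrix.mulVec_sub, Matrix.mulVec_smul, Matrix.mulVec_smul, hUe, hUξ]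
    rw [hS, h1, h2, h3, h4]
    match_scalars <;> ring
  -- trig recursion identities
  have hsinrec : ∀ n : ℕ,
      Real.sin ((2 * ((n : ℝ) + 1) + 1) * θ)
        = Real.sin ((2 * (n : ℝ) + 1) * θ) * (Real.cos θ * Real.cos θ - Real.sin θ * Real.sin θ)
          + Real.cos ((2 * (n : ℝ) + 1) * θ) * (2 * Real.sin θ * Real.cos θ) := by
    intro n
    rw [show (2 * ((n : ℝ) + 1) + 1) * θ = (2 * (n : ℝ) + 1) * θ + 2 * θ from by ring,
      Real.sin_add, Real.cos_two_mul, Real.sin_two_mul]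
    linear_combination Real.sin ((2 * (n : ℝ) + 1) * θ) * Real.sin_sq_add_cos_sq θ
  have hcosrec : ∀ n : ℕ,
      Real.cos ((2 * ((n : ℝ) + 1) + 1) * θ)
        = Real.cos ((2 * (n : ℝ) + 1) * θ) * (Real.cos θ * Real.cos θ - Real.sin θ * Real.sin θ)
          - Real.sin ((2 * (n : ℝ) + 1) * θ) * (2 * Real.sin θ * Real.cos θ) := by
    intro n
    rw [show (2 * ((n : ℝ) + 1) + 1) * θ = (2 * (n : ℝ) + 1) * θ + 2 * θ from by ring,
      Real.cos_add, Real.cos_two_mul, Real.sin_two_mul]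
    linear_combination Real.cos ((2 * (n : ℝ) + 1) * θ) * Real.sin_sq_add_cos_sq θ
  -- main induction
  induction ℓ with
  | zero =>
    rw [pow_zero, one_mul]
    rw [show (2 * ((0 : ℕ) : ℝ) + 1) * θ = θ from by norm_num]
    exact hUe ψ
  | succ n ih =>
    have hpow : S ^ (n + 1) * U = S * (S ^ n * U) := by
      rw [pow_succ', Matrix.mul_assoc]
    rw [hpow, ← Matrix.mulVec_mulVec, ih, hstep]
    have hn : ((n + 1 : ℕ) : ℝ) = (n : ℝ) + 1 := by push_cast; ring
    match_scalars
    · rw [hc, hdc, Complex.ofReal_sin, Complex.ofReal_cos,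
        show (2 * ((n : ℂ) + 1) + 1) * (θ : ℂ) = (2 * (n : ℂ) + 1) * (θ : ℂ) + 2 * (θ : ℂ) from by
          ring,
        Complex.sin_add, Complex.sin_two_mul, Complex.cos_two_mul]
      linear_combination -Complex.sin ((2 * (n : ℂ) + 1) * (θ : ℂ)) * Complex.sin_sq_add_cos_sq (θ : ℂ)
    · rw [hc, hdc, Complex.ofReal_sin, Complex.ofReal_cos,
        show (2 * ((n : ℂ) + 1) + 1) * (θ : ℂ) = (2 * (n : ℂ) + 1) * (θ : ℂ) + 2 * (θ : ℂ) from by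
          ring,
        Complex.cos_add, Complex.sin_two_mul, Complex.cos_two_mul]
      linear_combination -Complex.cos ((2 * (n : ℂ) + 1) * (θ : ℂ)) * Complex.sin_sq_add_cos_sq (θ : ℂ)
end

section
/- (Projection Lemma) Let 𝓗 be a nonzero finite-dimensional complex Hilbert space, S ⊆ 𝓗 a nonzero subspace with orthogonal complement S^⊥, and let H_1, H_2 be Hermitian operators on 𝓗. Assume H_2 ψ = 0 for all ψ ∈ S, and ⟨ψ, H_2 ψ⟩ ≥ J‖ψ‖² for all ψ ∈ S^⊥, for some real J > 2‖H_1‖, where ‖H_1‖ is the operator norm. Then λ_min(H_1|_S) − ‖H_1‖²/(J − 2‖H_1‖) ≤ λ_min(H_1 + H_2) ≤ λ_min(H_1|_S), where H_1|_S := Π_S H_1 Π_S restricted to S (Π_S the orthogonal projector onto S), and λ_min(A) denotes the smallest eigenvalue of a Hermitian operator A, i.e., the minimum of ⟨ψ, Aψ⟩ over unit vectors ψ in the relevant space. -/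
/-- The smallest eigenvalue of a Hermitian operator, as the infimum of the
Rayleigh quotient over unit vectors. -/
noncomputable def lmin {E : Type*} [NormedAddCommGroup E] [InnerProductSpace ℂ E]
    (A : E →ₗ[ℂ] E) : ℝ :=
  sInf ((fun ψ => (@inner ℂ E _ ψ (A ψ)).re) '' {ψ : E | ‖ψ‖ = 1})

set_option maxHeartbeats 1000000 in
/-- The Projection Lemma of Kempe–Kitaev–Regev. -/
theorem stmt_10 {𝓗 : Type*} [NormedAddCommGroup 𝓗] [InnerProductSpace ℂ 𝓗]
    [FiniteDimensional ℂ 𝓗] [Nontrivial 𝓗]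
    (S : Submodule ℂ 𝓗) (hS : S ≠ ⊥)
    (H₁ H₂ : 𝓗 →L[ℂ] 𝓗)
    (hH₁ : ∀ x y : 𝓗, (@inner ℂ 𝓗 _ (H₁ x) y) = @inner ℂ 𝓗 _ x (H₁ y))
    (hH₂ : ∀ x y : 𝓗, (@inner ℂ 𝓗 _ (H₂ x) y) = @inner ℂ 𝓗 _ x (H₂ y))
    (hker : ∀ ψ ∈ S, H₂ ψ = 0)
    (J : ℝ) (hJ : 2 * ‖H₁‖ < J)
    (hgap : ∀ ψ ∈ Sᗮ, J * ‖ψ‖ ^ 2 ≤ (@inner ℂ 𝓗 _ ψ (H₂ ψ)).re) :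
    let H₁S : S →ₗ[ℂ] S :=
      (S.orthogonalProjection).toLinearMap ∘ₗ (H₁ : 𝓗 →ₗ[ℂ] 𝓗) ∘ₗ S.subtype
    lmin H₁S - ‖H₁‖ ^ 2 / (J - 2 * ‖H₁‖) ≤ lmin ((H₁ + H₂ : 𝓗 →L[ℂ] 𝓗) : 𝓗 →ₗ[ℂ] 𝓗) ∧
    lmin ((H₁ + H₂ : 𝓗 →L[ℂ] 𝓗) : 𝓗 →ₗ[ℂ] 𝓗) ≤ lmin H₁S := by
  intro H₁S
  set K : ℝ := ‖H₁‖ with hKdef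
  have hK0 : (0:ℝ) ≤ K := norm_nonneg _
  have hJK : (0:ℝ) < J - 2*K := by linarith
  -- value of the compressed form
  have hval : ∀ ψ : S, (@inner ℂ S _ ψ (H₁S ψ)).re
      = (@inner ℂ 𝓗 _ (ψ:𝓗) (H₁ (ψ:𝓗))).re := by
    intro ψ
    have : (@inner ℂ S _ ψ (H₁S ψ)) = @inner ℂ 𝓗 _ (ψ:𝓗) (H₁ (ψ:𝓗)) := by
      show (@inner ℂ S _ ψ (S.orthogonalProjection (H₁ (ψ:𝓗)))) = _
      exact Submodule.inner_orthogonalProjection_eq_of_mem_left ψ (H₁ (ψ:𝓗))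
    rw [this]
  -- a unit vector in S
  obtain ⟨x, hxS, hx0⟩ := Submodule.exists_mem_ne_zero_of_ne_bot hS
  have hxn : ‖x‖ ≠ 0 := norm_ne_zero_iff.mpr hx0
  set u : S := (‖x‖⁻¹ : ℂ) • ⟨x, hxS⟩ with hu
  have hunorm : ‖u‖ = 1 := by
    rw [hu, norm_smul]
    have h1 : ‖(⟨x, hxS⟩ : S)‖ = ‖x‖ := rfl
    rw [h1]
    simp only [norm_inv, Complex.norm_real, norm_norm]
    field_simp
  -- the set of Rayleigh values of H₁S
  set T : Set ℝ := ((fun ψ => (@inner ℂ S _ ψ (H₁S ψ)).re) '' {ψ : S | ‖ψ‖ = 1}) with hT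
  have hTne : T.Nonempty := ⟨_, ⟨u, hunorm, rfl⟩⟩
  have hTmem : ∀ t ∈ T, -K ≤ t ∧ t ≤ K := by
    rintro t ⟨ψ, hψ, rfl⟩
    dsimp only
    have h1 : ‖(ψ:𝓗)‖ = 1 := hψ
    have hb : ‖(@inner ℂ 𝓗 _ (ψ:𝓗) (H₁ (ψ:𝓗)))‖ ≤ K := by
      calc ‖(@inner ℂ 𝓗 _ (ψ:𝓗) (H₁ (ψ:𝓗)))‖ ≤ ‖(ψ:𝓗)‖ * ‖H₁ (ψ:𝓗)‖ :=
            norm_inner_le_norm _ _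
        _ ≤ ‖(ψ:𝓗)‖ * (K * ‖(ψ:𝓗)‖) := by
            have := H₁.le_opNorm (ψ:𝓗); gcongr
        _ = K := by rw [h1]; ring
    have habs : |(@inner ℂ 𝓗 _ (ψ:𝓗) (H₁ (ψ:𝓗))).re| ≤ K :=
      le_trans (Complex.abs_re_le_norm _) hb
    rw [hval]
    exact abs_le.mp habs
  have hTbdd : BddBelow T := ⟨-K, fun t ht => (hTmem t ht).1⟩
  set lam : ℝ := lmin H₁S with hlam
  have hlamT : lam = sInf T := rfl
  have hlamK : lam ≤ K := by
    obtain ⟨t, ht⟩ := hTne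
    exact le_trans (hlamT ▸ csInf_le hTbdd ht) (hTmem t ht).2
  -- Rayleigh lower bound on S
  have hlow : ∀ α : 𝓗, α ∈ S → lam * ‖α‖^2 ≤ (@inner ℂ 𝓗 _ α (H₁ α)).re := by
    intro α hα
    rcases eq_or_ne α 0 with rfl | h0
    · simp
    · set t : ℝ := ‖α‖ with ht
      have ht0 : 0 < t := norm_pos_iff.mpr h0
      have htn : t ≠ 0 := ne_of_gt ht0
      set v : S := (t⁻¹ : ℂ) • ⟨α, hα⟩ with hv
      have hvnorm : ‖v‖ = 1 := by
        rw [hv, norm_smul]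
        have h1 : ‖(⟨α, hα⟩ : S)‖ = t := rfl
        rw [h1]
        simp only [norm_inv, Complex.norm_real, Real.norm_eq_abs]
        rw [abs_of_pos ht0]
        field_simp
      have hmemT : (@inner ℂ S _ v (H₁S v)).re ∈ T := ⟨v, hvnorm, rfl⟩
      have h1 : lam ≤ (@inner ℂ S _ v (H₁S v)).re := hlamT ▸ csInf_le hTbdd hmemT
      set r : ℝ := (@inner ℂ 𝓗 _ α (H₁ α)).re with hr
      have h2 : (@inner ℂ S _ v (H₁S v)).re = t⁻¹ * t⁻¹ * r := by
        rw [hval]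
        have hcoe : ((v : S) : 𝓗) = (t⁻¹ : ℂ) • α := rfl
        rw [hcoe, map_smul, inner_smul_left, inner_smul_right]
        rw [hr]
        simp [Complex.ofReal_inv]
        ring
      rw [h2] at h1
      have h4 := mul_le_mul_of_nonneg_right h1 (le_of_lt (mul_pos ht0 ht0))
      have heq : t⁻¹ * t⁻¹ * r * (t * t) = r := by field_simp
      rw [heq] at h4
      have h5 : lam * t^2 = lam * (t * t) := by ring
      linarith [h4, h5.le, h5.ge]
  -- key pointwise estimate for the lower bound
  have key : ∀ ψ : 𝓗, ‖ψ‖ = 1 →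
      lam - K^2/(J - 2*K) ≤ (@inner ℂ 𝓗 _ ψ ((H₁ + H₂) ψ)).re := by
    intro ψ hψ
    set α : 𝓗 := (S.orthogonalProjection ψ : 𝓗) with hα
    set β : 𝓗 := (Sᗮ.orthogonalProjection ψ : 𝓗) with hβ
    have hαS : α ∈ S := (S.orthogonalProjection ψ).2
    have hβS : β ∈ Sᗮ := (Sᗮ.orthogonalProjection ψ).2
    have hsum : α + β = ψ := S.starProjection_add_starProjection_orthogonal ψ
    have hperp : (@inner ℂ 𝓗 _ α β) = 0 :=
      Submodule.inner_right_of_mem_orthogonal hαS hβS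
    set a : ℝ := ‖α‖ with ha
    set b : ℝ := ‖β‖ with hb
    have ha0 : 0 ≤ a := norm_nonneg _
    have hb0 : 0 ≤ b := norm_nonneg _
    have hpyth : a^2 + b^2 = 1 := by
      have h := norm_add_sq_eq_norm_sq_add_norm_sq_of_inner_eq_zero α β hperp
      rw [hsum, hψ] at h
      nlinarith [h]
    have ha1 : a ≤ 1 := by nlinarith [sq_nonneg (a - 1), sq_nonneg b]
    -- H₂ part
    have hH₂α : H₂ α = 0 := hker α hαS
    have hH₂part : J * b^2 ≤ (@inner ℂ 𝓗 _ ψ (H₂ ψ)).re := by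
      have e1 : (@inner ℂ 𝓗 _ ψ (H₂ ψ)) = @inner ℂ 𝓗 _ β (H₂ β) := by
        rw [← hsum]
        rw [map_add, hH₂α, zero_add, inner_add_left]
        have h0 : (@inner ℂ 𝓗 _ α (H₂ β)) = 0 := by
          rw [← hH₂ α β, hH₂α, inner_zero_left]
        rw [h0, zero_add]
      rw [e1]
      exact hgap β hβS
    -- H₁ cross bounds
    have hcross : ∀ x y : 𝓗, -(K * ‖x‖ * ‖y‖) ≤ (@inner ℂ 𝓗 _ x (H₁ y)).re := by
      intro x y
      have h1 : ‖(@inner ℂ 𝓗 _ x (H₁ y))‖ ≤ K * ‖x‖ * ‖y‖ := by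
        calc ‖(@inner ℂ 𝓗 _ x (H₁ y))‖ ≤ ‖x‖ * ‖H₁ y‖ := norm_inner_le_norm _ _
          _ ≤ ‖x‖ * (K * ‖y‖) := by have := H₁.le_opNorm y; gcongr
          _ = K * ‖x‖ * ‖y‖ := by ring
      have h2 : |(@inner ℂ 𝓗 _ x (H₁ y)).re| ≤ K * ‖x‖ * ‖y‖ :=
        le_trans (Complex.abs_re_le_norm _) h1
      linarith [abs_le.mp h2]
    have hH₁expand : (@inner ℂ 𝓗 _ ψ (H₁ ψ)).re
        = (@inner ℂ 𝓗 _ α (H₁ α)).re + 2 * (@inner ℂ 𝓗 _ α (H₁ β)).re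
          + (@inner ℂ 𝓗 _ β (H₁ β)).re := by
      rw [← hsum, map_add, inner_add_left, inner_add_right, inner_add_right]
      have hsym : (@inner ℂ 𝓗 _ β (H₁ α)).re = (@inner ℂ 𝓗 _ α (H₁ β)).re := by
        have e : (@inner ℂ 𝓗 _ β (H₁ α)) = starRingEnd ℂ (@inner ℂ 𝓗 _ α (H₁ β)) := by
          rw [← hH₁ β α, ← inner_conj_symm]
        rw [e, Complex.conj_re]
      simp only [Complex.add_re]
      rw [hsym]; ring
    have hA : lam * a^2 ≤ (@inner ℂ 𝓗 _ α (H₁ α)).re := hlow α hαS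
    have hB : -(K * a * b) ≤ (@inner ℂ 𝓗 _ α (H₁ β)).re := hcross α β
    have hC : -(K * b * b) ≤ (@inner ℂ 𝓗 _ β (H₁ β)).re := hcross β β
    have htotal : (@inner ℂ 𝓗 _ ψ ((H₁ + H₂) ψ)).re
        = (@inner ℂ 𝓗 _ ψ (H₁ ψ)).re + (@inner ℂ 𝓗 _ ψ (H₂ ψ)).re := by
      rw [ContinuousLinearMap.add_apply, inner_add_right, Complex.add_re]
    have hdiv : K^2/(J - 2*K) * (J - 2*K) = K^2 := div_mul_cancel₀ _ (ne_of_gt hJK)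
    have h1 : 0 ≤ (J - 2*K)*b^2 - 2*K*b + K^2/(J - 2*K) := by
      have h2 : 0 ≤ ((J - 2*K)*b - K)^2 := sq_nonneg _
      have h3 : ((J - 2*K)*b^2 - 2*K*b + K^2/(J - 2*K)) * (J - 2*K)
          = ((J - 2*K)*b - K)^2 := by field_simp; ring
      nlinarith [h2, h3, hJK]
    have hlab : K * a * b ≤ K * b := by
      nlinarith [mul_nonneg (mul_nonneg hK0 hb0) (sub_nonneg.mpr ha1)]
    have hlamb : lam * b^2 ≤ K * b^2 := mul_le_mul_of_nonneg_right hlamK (sq_nonneg b)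
    have hlama : lam * a^2 = lam - lam * b^2 := by
      have h4 : a^2 = 1 - b^2 := by linarith
      rw [h4]; ring
    have hstep : lam - K^2/(J - 2*K)
        ≤ lam * a^2 + 2 * (-(K * a * b)) + (-(K * b * b)) + J * b^2 := by
      have hb2 : b * b = b^2 := by ring
      nlinarith [h1, hlab, hlamb, hlama]
    rw [htotal, hH₁expand]
    linarith [hA, hB, hC, hH₂part]
  -- sets for H₁ + H₂
  set V : Set ℝ := ((fun ψ : 𝓗 => (@inner ℂ 𝓗 _ ψ
      (((H₁ + H₂ : 𝓗 →L[ℂ] 𝓗) : 𝓗 →ₗ[ℂ] 𝓗) ψ)).re) '' {ψ : 𝓗 | ‖ψ‖ = 1}) with hV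
  have hVmin : lmin ((H₁ + H₂ : 𝓗 →L[ℂ] 𝓗) : 𝓗 →ₗ[ℂ] 𝓗) = sInf V := rfl
  have hVeq : ∀ ψ : 𝓗, (@inner ℂ 𝓗 _ ψ (((H₁ + H₂ : 𝓗 →L[ℂ] 𝓗) : 𝓗 →ₗ[ℂ] 𝓗) ψ)).re
      = (@inner ℂ 𝓗 _ ψ ((H₁ + H₂) ψ)).re := fun ψ => rfl
  have hVlb : ∀ v ∈ V, lam - K^2/(J - 2*K) ≤ v := by
    rintro v ⟨ψ, hψ, rfl⟩
    dsimp only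
    rw [hVeq]
    exact key ψ hψ
  have hVbdd : BddBelow V := ⟨lam - K^2/(J - 2*K), hVlb⟩
  -- T ⊆ V
  have hTsubV : T ⊆ V := by
    rintro t ⟨ψ, hψ, rfl⟩
    refine ⟨(ψ:𝓗), hψ, ?_⟩
    dsimp only
    rw [hVeq, hval]
    have h0 : H₂ (ψ:𝓗) = 0 := hker _ ψ.2
    rw [ContinuousLinearMap.add_apply, h0, add_zero]
  constructor
  · rw [hVmin]
    exact le_csInf (hTne.mono hTsubV) hVlb
  · rw [hVmin, hlamT]
    exact csInf_le_csInf hVbdd hTne hTsubV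
end

section
/- Let T ≥ 1 be an integer and let H_clock be the real diagonal matrix indexed by bit strings x : {0,…,T} → {0,1}, whose diagonal entry at x is λ(x) := 4T·|{(i,j) : i < j, x_i = 1 = x_j}| + |{t : x_t = 0}| − T·|{t : x_t = 1}|. Then: (i) λ(x) ≥ 0 for all x, so H_clock is positive semidefinite; (ii) λ(x) = 0 if and only if x has Hamming weight exactly 1; and (iii) λ(x) ≥ T whenever the Hamming weight of x is not 1. Consequently the kernel of H_clock is spanned by the T+1 one-hot basis vectors |0^t 1 0^{T−t}⟩, t ∈ {0,…,T}, and the smallest nonzero eigenvalue of H_clock is at least T. -/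
/-- Properties of the one-hot clock Hamiltonian `H_clock`. -/
theorem stmt_11 (T : ℕ) (hT : 1 ≤ T) :
    -- the diagonal entry of `H_clock` at basis state `x`
    let lam : (Fin (T + 1) → Bool) → ℝ := fun x =>
      4 * T * ((Finset.univ.filter
          (fun p : Fin (T + 1) × Fin (T + 1) => p.1 < p.2 ∧ x p.1 = true ∧ x p.2 = true)).card : ℝ)
        + ((Finset.univ.filter (fun t => x t = false)).card : ℝ)
        - T * ((Finset.univ.filter (fun t => x t = true)).card : ℝ)
    -- (i) positivity
    (∀ x, 0 ≤ lam x) ∧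
    -- (ii) zero exactly on Hamming-weight-one strings
    (∀ x, lam x = 0 ↔ (Finset.univ.filter (fun t => x t = true)).card = 1) ∧
    -- (iii) spectral gap at least T
    (∀ x, (Finset.univ.filter (fun t => x t = true)).card ≠ 1 → (T : ℝ) ≤ lam x) ∧
    -- consequently, the kernel is spanned by the one-hot basis vectors
    LinearMap.ker (Matrix.diagonal lam).mulVecLin
      = Submodule.span ℝ {v : (Fin (T + 1) → Bool) → ℝ |
          ∃ x : Fin (T + 1) → Bool,
            (Finset.univ.filter (fun t => x t = true)).card = 1 ∧ v = Pi.single x 1} := by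
  intro lam
  -- notation
  set k : (Fin (T + 1) → Bool) → ℕ :=
    fun x => (Finset.univ.filter (fun t => x t = true)).card with hk
  have hz : ∀ x, ((Finset.univ.filter (fun t => x t = false)).card : ℕ) = (T + 1) - k x := by
    intro x
    have h := Finset.card_filter_add_card_filter_not
      (s := (Finset.univ : Finset (Fin (T+1)))) (p := fun t => x t = true)
    have hfl : (Finset.univ.filter (fun t => ¬ x t = true)).card
        = (Finset.univ.filter (fun t => x t = false)).card := by
      congr 1
      apply Finset.filter_congr
      intro t _
      simp
    rw [hfl] at h
    simp only [Finset.card_univ, Fintype.card_fin] at h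
    have hkx : k x = (Finset.univ.filter (fun t => x t = true)).card := rfl
    omega
  have hkle : ∀ x, k x ≤ T + 1 := by
    intro x
    simpa using Finset.card_filter_le Finset.univ (fun t => x t = true)
  -- main dichotomy
  have main : ∀ x, (k x = 1 ∧ lam x = 0) ∨ (k x ≠ 1 ∧ (T : ℝ) ≤ lam x) := by
    intro x
    set P : ℕ := (Finset.univ.filter
      (fun p : Fin (T + 1) × Fin (T + 1) => p.1 < p.2 ∧ x p.1 = true ∧ x p.2 = true)).card with hP
    have hlam : lam x = 4 * T * P + ((T + 1 : ℕ) - k x : ℕ) - T * k x := by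
      simp only [lam, hz x]
      rfl
    rcases Nat.lt_or_ge (k x) 2 with hk2 | hk2
    · interval_cases hkx : k x
      · -- k = 0
        right
        refine ⟨by omega, ?_⟩
        have hS : (Finset.univ.filter (fun t => x t = true)) = ∅ :=
          Finset.card_eq_zero.mp hkx
        have hP0 : P = 0 := by
          rw [hP, Finset.card_eq_zero, Finset.filter_eq_empty_iff]
          intro p _ hp
          have : p.1 ∈ Finset.univ.filter (fun t => x t = true) := by
            simp [hp.2.1]
          simp [hS] at this
        rw [hlam, hP0]
        push_cast [Nat.add_sub_cancel]
        norm_num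
      · -- k = 1
        left
        refine ⟨rfl, ?_⟩
        obtain ⟨m, hm⟩ := Finset.card_eq_one.mp hkx
        have hP0 : P = 0 := by
          rw [hP, Finset.card_eq_zero, Finset.filter_eq_empty_iff]
          intro p _ hp
          have h1 : p.1 ∈ Finset.univ.filter (fun t => x t = true) := by simp [hp.2.1]
          have h2 : p.2 ∈ Finset.univ.filter (fun t => x t = true) := by simp [hp.2.2]
          rw [hm, Finset.mem_singleton] at h1 h2
          exact absurd hp.1 (by rw [h1, h2]; exact lt_irrefl m)
        rw [hlam, hP0]
        push_cast [Nat.add_sub_cancel]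
        ring
    · -- k ≥ 2
      right
      refine ⟨(lt_of_lt_of_le one_lt_two hk2).ne', ?_⟩
      set S := Finset.univ.filter (fun t => x t = true) with hS
      have hSk : S.card = k x := rfl
      have hSne : S.Nonempty := Finset.card_pos.mp (by omega)
      set m := S.min' hSne with hmdef
      have hmS : m ∈ S := S.min'_mem hSne
      have hxm : x m = true := by simpa [hS] using hmS
      have hinj : S.erase m ⊆ S.erase m := le_refl _
      have hPge : k x - 1 ≤ P := by
        have := Finset.card_le_card_of_injOn
          (f := fun t => ((m, t) : Fin (T+1) × Fin (T+1)))
          (s := S.erase m)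
          (t := Finset.univ.filter
            (fun p : Fin (T + 1) × Fin (T + 1) => p.1 < p.2 ∧ x p.1 = true ∧ x p.2 = true))
          (by
            intro t ht
            have htm := Finset.ne_of_mem_erase ht
            have htS := Finset.mem_of_mem_erase ht
            have hxt : x t = true := by simpa [hS] using htS
            have : m < t := lt_of_le_of_ne (S.min'_le t htS) (Ne.symm htm)
            simp [this, hxm, hxt])
          (by
            intro a _ b _ hab
            exact (Prod.mk.injEq _ _ _ _).mp hab |>.2)
        rw [Finset.card_erase_of_mem hmS] at this
        exact this
      -- now arithmetic
      rw [hlam]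
      have hkk : (2 : ℕ) ≤ k x := hk2
      have hkT : k x ≤ T + 1 := hkle x
      have h1k : 1 ≤ k x := le_trans (by norm_num) hkk
      have hcast : (((T + 1 : ℕ) - k x : ℕ) : ℝ) = (T : ℝ) + 1 - k x := by
        rw [Nat.cast_sub (hkle x)]
        push_cast
        ring
      rw [hcast]
      have hPr : ((k x : ℝ) - 1) ≤ (P : ℝ) := by
        have h2 : ((k x - 1 : ℕ) : ℝ) ≤ (P : ℝ) := Nat.cast_le.mpr hPge
        rw [Nat.cast_sub h1k] at h2
        simpa using h2
      have hTr : (1 : ℝ) ≤ T := by exact_mod_cast hT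
      have hkr : (2 : ℝ) ≤ k x := by exact_mod_cast hkk
      nlinarith [mul_le_mul_of_nonneg_left hPr (by positivity : (0:ℝ) ≤ 4 * T)]
  have part1 : ∀ x, 0 ≤ lam x := by
    intro x
    rcases main x with ⟨_, h⟩ | ⟨_, h⟩
    · exact h.ge
    · have : (0:ℝ) ≤ T := by positivity
      linarith
  have part3 : ∀ x, k x ≠ 1 → (T : ℝ) ≤ lam x := by
    intro x hx
    rcases main x with ⟨h1, _⟩ | ⟨_, h⟩
    · exact absurd h1 hx
    · exact h
  have part2 : ∀ x, lam x = 0 ↔ k x = 1 := by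
    intro x
    constructor
    · intro h
      by_contra hx
      have := part3 x hx
      have hTr : (1 : ℝ) ≤ T := by exact_mod_cast hT
      linarith
    · intro h
      rcases main x with ⟨_, h2⟩ | ⟨h1, _⟩
      · exact h2
      · exact absurd h h1
  refine ⟨part1, part2, part3, ?_⟩
  -- kernel part
  apply le_antisymm
  · intro v hv
    rw [LinearMap.mem_ker] at hv
    have hv' : ∀ i, lam i * v i = 0 := by
      intro i
      have := congrFun (show (Matrix.diagonal lam).mulVecLin v = 0 from hv) i
      simpa [Matrix.mulVecLin_apply, Matrix.mulVec_diagonal] using this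
    have hvdecomp : v = ∑ i : Fin (T+1) → Bool,
        v i • (Pi.single i 1 : (Fin (T+1) → Bool) → ℝ) := by
      conv_lhs => rw [← Finset.univ_sum_single v]
      apply Finset.sum_congr rfl
      intro i _
      ext j
      rcases eq_or_ne j i with rfl | hji
      · simp
      · simp [Pi.single_eq_of_ne hji]
    rw [hvdecomp]
    apply Submodule.sum_mem
    intro i _
    by_cases hlami : lam i = 0
    · apply Submodule.smul_mem
      apply Submodule.subset_span
      exact ⟨i, (part2 i).mp hlami, rfl⟩
    · have : v i = 0 := by
        rcases mul_eq_zero.mp (hv' i) with h | h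
        · exact absurd h hlami
        · exact h
      rw [this, zero_smul]
      exact Submodule.zero_mem _
  · rw [Submodule.span_le]
    rintro v ⟨x, hx, rfl⟩
    rw [SetLike.mem_coe, LinearMap.mem_ker]
    have hlamx : lam x = 0 := (part2 x).mpr hx
    ext i
    simp only [Matrix.mulVecLin_apply, Matrix.mulVec_diagonal, Pi.zero_apply]
    by_cases hix : i = x
    · subst hix; simp [hlamx]
    · simp [Pi.single_eq_of_ne hix]
end

section
/- Let ψ_0, ψ_1 ∈ ℂ² be orthonormal. Define the operator H_split on ℂ²_A ⊗ (ℂ²)^{⊗3} (clock qubits C_0, C_1, C_2) by H_split = |ψ_1⟩⟨ψ_1|_A ⊗ |1⟩⟨1|_{C_1} + |ψ_0⟩⟨ψ_0|_A ⊗ |1⟩⟨1|_{C_2} + I_A ⊗ [ |1⟩⟨1|_{C_0} − |10⟩⟨01|_{C_0C_1} − |10⟩⟨01|_{C_0C_2} + |1⟩⟨1|_{C_1} − |10⟩⟨01|_{C_1C_0} + |10⟩⟨01|_{C_1C_2} + |1⟩⟨1|_{C_2} − |10⟩⟨01|_{C_2C_0} + |10⟩⟨01|_{C_2C_1} ]. Let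 S_clock ⊆ (ℂ²)^{⊗3} be the span of |100⟩, |010⟩, |001⟩, and Π := I_A ⊗ P_{S_clock} with P_{S_clock} the orthogonal projector onto S_clock. Then: H_split is Hermitian; Π H_split Π is positive semidefinite; the kernel of Π H_split Π intersected with ℂ² ⊗ S_clock equals the span of φ_0 := (1/√2)·ψ_0 ⊗ (|100⟩ + |010⟩) and φ_1 := (1/√2)·ψ_1 ⊗ (|100⟩ + |001⟩); and moreover H_split φ_0 = H_split φ_1 = 0. -/
open Matrix Kronecker ComplexOrder

/-- The projector `|1⟩⟨1|` on a single (Bool-indexed) qubit. -/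
def P1 : Matrix Bool Bool ℂ :=
  Matrix.of fun b c => if b = true ∧ c = true then 1 else 0

/-- The rank-one operator `|v⟩⟨w|` on two qubits, for computational basis states `v, w`. -/
def ketbra2 (v w : Bool × Bool) : Matrix (Bool × Bool) (Bool × Bool) ℂ :=
  Matrix.of fun u u' => if u = v ∧ u' = w then 1 else 0

/-- A single-qubit operator `M` acting on clock qubit `i` (identity on the other
clock qubits). -/
def clock1 (m : ℕ) (i : Fin m) (M : Matrix Bool Bool ℂ) :
    Matrix (Fin m → Bool) (Fin m → Bool) ℂ :=
  Matrix.of fun c c' => M (c i) (c' i) * (if ∀ t, t ≠ i → c t = c' t then 1 else 0)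

/-- A two-qubit operator `M` acting on the (ordered) pair of clock qubits `i, j`
(identity on the other clock qubits). -/
def clock2 (m : ℕ) (i j : Fin m) (M : Matrix (Bool × Bool) (Bool × Bool) ℂ) :
    Matrix (Fin m → Bool) (Fin m → Bool) ℂ :=
  Matrix.of fun c c' => M (c i, c j) (c' i, c' j) *
    (if ∀ t, t ≠ i → t ≠ j → c t = c' t then 1 else 0)

/-- `|10⟩⟨01|`. -/
def K10 : Matrix (Bool × Bool) (Bool × Bool) ℂ := ketbra2 (true, false) (false, true)

/-- The split gadget `H_split`, with computational operators `Pψ0 = |ψ₀⟩⟨ψ₀|`,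
`Pψ1 = |ψ₁⟩⟨ψ₁|` on register `α`, acting on the clock qubits `a, b, c` among `m`
clock qubits. -/
noncomputable def HsplitOn {α : Type} [Fintype α] [DecidableEq α] (m : ℕ)
    (Pψ0 Pψ1 : Matrix α α ℂ) (a b c : Fin m) :
    Matrix (α × (Fin m → Bool)) (α × (Fin m → Bool)) ℂ :=
  Pψ1 ⊗ₖ clock1 m b P1 + Pψ0 ⊗ₖ clock1 m c P1 +
  (1 : Matrix α α ℂ) ⊗ₖ
    (clock1 m a P1 - clock2 m a b K10 - clock2 m a c K10
      + clock1 m b P1 - clock2 m b a K10 + clock2 m b c K10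
      + clock1 m c P1 - clock2 m c a K10 + clock2 m c b K10)

/-- The one-hot clock basis state `|0^t 1 0^{m-1-t}⟩`. -/
def oneHot (m : ℕ) (t : Fin m) : Fin m → Bool := fun s => decide (s = t)

/-- The orthogonal projector onto the span of the one-hot clock states. -/
noncomputable def clockProj (m : ℕ) : Matrix (Fin m → Bool) (Fin m → Bool) ℂ :=
  ∑ t : Fin m, Matrix.of fun c c' =>
    (if c = oneHot m t then 1 else 0) * (if c' = oneHot m t then 1 else 0)

-- ## auxiliary material
abbrev st12CI : Type := Fin 3 → Bool

def st12chz (t : Fin 3) : st12CI → ℤ := fun c => if c = oneHot 3 t then 1 else 0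

def st12C1z (i : Fin 3) : Matrix st12CI st12CI ℤ :=
  Matrix.of fun c c' => (if c i = true ∧ c' i = true then 1 else 0) *
    (if ∀ t, t ≠ i → c t = c' t then 1 else 0)

def st12Tz (i j : Fin 3) : Matrix st12CI st12CI ℤ :=
  Matrix.of fun c c' =>
    (if (c i, c j) = (true, false) ∧ (c' i, c' j) = (false, true) then 1 else 0) *
    (if ∀ t, t ≠ i → t ≠ j → c t = c' t then 1 else 0)

def st12Qz : Matrix st12CI st12CI ℤ :=
  Matrix.of fun c c' =>
    (if c = oneHot 3 0 then 1 else 0) * (if c' = oneHot 3 0 then 1 else 0)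
    + (if c = oneHot 3 1 then 1 else 0) * (if c' = oneHot 3 1 then 1 else 0)
    + (if c = oneHot 3 2 then 1 else 0) * (if c' = oneHot 3 2 then 1 else 0)

def st12Bz : Matrix st12CI st12CI ℤ :=
  st12C1z 0 - st12Tz 0 1 - st12Tz 0 2 + st12C1z 1 - st12Tz 1 0 + st12Tz 1 2
    + st12C1z 2 - st12Tz 2 0 + st12Tz 2 1

def st12r1 (f g : st12CI → ℤ) : Matrix st12CI st12CI ℤ := Matrix.of fun c c' => f c * g c'

noncomputable def st12cm : Matrix st12CI st12CI ℤ →+* Matrix st12CI st12CI ℂ :=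
  (Int.castRingHom ℂ).mapMatrix

noncomputable def st12ch (t : Fin 3) : st12CI → ℂ := fun c => if c = oneHot 3 t then 1 else 0

noncomputable def st12cv (v : st12CI → ℤ) : st12CI → ℂ := fun c => (v c : ℂ)

lemma st12cm_apply (M : Matrix st12CI st12CI ℤ) (c c' : st12CI) :
    st12cm M c c' = ((M c c' : ℤ) : ℂ) := rfl

-- cast lemmas
lemma st12_clock1_cast (i : Fin 3) : clock1 3 i P1 = st12cm (st12C1z i) := by
  ext c c'
  simp only [clock1, st12C1z, P1, Matrix.of_apply, st12cm_apply]
  split_ifs <;> simp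

lemma st12_clock2_cast (i j : Fin 3) : clock2 3 i j K10 = st12cm (st12Tz i j) := by
  ext c c'
  simp only [clock2, st12Tz, K10, ketbra2, Matrix.of_apply, st12cm_apply]
  split_ifs <;> simp

lemma st12_clockProj_cast : clockProj 3 = st12cm st12Qz := by
  ext c c'
  simp only [clockProj, Matrix.sum_apply, Fin.sum_univ_three, Matrix.of_apply,
    st12Qz, st12cm_apply]
  split_ifs <;> norm_num

lemma st12_ch_cast (t : Fin 3) : st12ch t = st12cv (st12chz t) := by
  funext c
  simp only [st12ch, st12cv, st12chz]
  split_ifs <;> simp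

lemma st12_cv_add (u v : st12CI → ℤ) : st12cv (u + v) = st12cv u + st12cv v := by
  funext c; simp [st12cv]

lemma st12_cv_zero : st12cv 0 = 0 := by funext c; simp [st12cv]

lemma st12_cast_mulVec (M : Matrix st12CI st12CI ℤ) (v : st12CI → ℤ) :
    st12cm M *ᵥ st12cv v = st12cv (M *ᵥ v) := by
  funext c
  simp [st12cm_apply, Matrix.mulVec, dotProduct, st12cv]

lemma st12_cast_conjTranspose (M : Matrix st12CI st12CI ℤ) :
    (st12cm M)ᴴ = st12cm Mᵀ := by
  ext c c'
  simp [st12cm_apply, Matrix.conjTranspose_apply]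

lemma st12_cast_r1 (f g : st12CI → ℤ) :
    st12cm (st12r1 f g) = Matrix.vecMulVec (st12cv f) (st12cv g) := by
  ext c c'
  simp [st12cm_apply, st12r1, Matrix.vecMulVec_apply, st12cv]

-- decide facts
set_option maxRecDepth 100000 in
lemma st12_dQQ : st12Qz * st12Qz = st12Qz := by decide

set_option maxRecDepth 100000 in
lemma st12_dQC1Q : st12Qz * st12C1z 1 * st12Qz = st12r1 (st12chz 1) (st12chz 1) := by decide

set_option maxRecDepth 100000 in
lemma st12_dQC2Q : st12Qz * st12C1z 2 * st12Qz = st12r1 (st12chz 2) (st12chz 2) := by decide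

set_option maxRecDepth 100000 in
lemma st12_dQBQ : st12Qz * st12Bz * st12Qz
    = st12r1 (st12chz 0 - st12chz 1 - st12chz 2) (st12chz 0 - st12chz 1 - st12chz 2) := by decide

set_option maxRecDepth 100000 in
lemma st12_dBt : st12Bzᵀ = st12Bz := by decide

set_option maxRecDepth 100000 in
lemma st12_dC1t : ∀ i : Fin 3, (st12C1z i)ᵀ = st12C1z i := by decide

set_option maxRecDepth 100000 in
lemma st12_dB01 : st12Bz *ᵥ (st12chz 0 + st12chz 1) = 0 := by decide

set_option maxRecDepth 100000 in
lemma st12_dB02 : st12Bz *ᵥ (st12chz 0 + st12chz 2) = 0 := by decide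

set_option maxRecDepth 100000 in
lemma st12_dC2v01 : st12C1z 2 *ᵥ (st12chz 0 + st12chz 1) = 0 := by decide

set_option maxRecDepth 100000 in
lemma st12_dC1v02 : st12C1z 1 *ᵥ (st12chz 0 + st12chz 2) = 0 := by decide

set_option maxRecDepth 100000 in
lemma st12_dQ01 : st12Qz *ᵥ (st12chz 0 + st12chz 1) = st12chz 0 + st12chz 1 := by decide

set_option maxRecDepth 100000 in
lemma st12_dQ02 : st12Qz *ᵥ (st12chz 0 + st12chz 2) = st12chz 0 + st12chz 2 := by decide


set_option linter.unusedSectionVars false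
section st12gen
variable {n m : Type} [Fintype n] [Fintype m] [DecidableEq n] [DecidableEq m]

def st12vK (f : n → ℂ) (g : m → ℂ) : n × m → ℂ := fun r => f r.1 * g r.2

lemma st12_kron_mulVec (A : Matrix n n ℂ) (B : Matrix m m ℂ) (f : n → ℂ) (g : m → ℂ) :
    (A ⊗ₖ B) *ᵥ st12vK f g = st12vK (A *ᵥ f) (B *ᵥ g) := by
  funext r
  obtain ⟨i, c⟩ := r
  simp only [Matrix.mulVec, dotProduct, st12vK, Fintype.sum_prod_type,
    Matrix.kroneckerMap_apply, Finset.sum_mul_sum]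
  exact Finset.sum_congr rfl fun j _ => Finset.sum_congr rfl fun d _ => by ring

lemma st12_kron_vmv (a b : n → ℂ) (u v : m → ℂ) :
    Matrix.vecMulVec a b ⊗ₖ Matrix.vecMulVec u v
      = Matrix.vecMulVec (st12vK a u) (st12vK b v) := by
  ext ⟨i, c⟩ ⟨j, d⟩
  simp only [Matrix.kroneckerMap_apply, Matrix.vecMulVec_apply, st12vK]
  ring

lemma st12_kron_conjTranspose (A : Matrix n n ℂ) (B : Matrix m m ℂ) :
    (A ⊗ₖ B)ᴴ = Aᴴ ⊗ₖ Bᴴ := by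
  ext ⟨i, c⟩ ⟨j, d⟩
  simp [Matrix.kroneckerMap_apply, Matrix.conjTranspose_apply, star_mul']

lemma st12_vmv_mulVec (a b x : n → ℂ) :
    Matrix.vecMulVec a b *ᵥ x = (b ⬝ᵥ x) • a := by
  funext i
  simp only [Matrix.mulVec, dotProduct, Matrix.vecMulVec_apply, Pi.smul_apply,
    smul_eq_mul, Finset.sum_mul]
  exact Finset.sum_congr rfl fun j _ => by ring

lemma st12_vmv_conjTranspose (v : n → ℂ) :
    (Matrix.vecMulVec v (star v))ᴴ = Matrix.vecMulVec v (star v) := by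
  ext i j
  simp only [Matrix.conjTranspose_apply, Matrix.vecMulVec_apply, Pi.star_apply,
    star_mul', star_star]
  ring

lemma st12_psd_vmv (v : n → ℂ) : (Matrix.vecMulVec v (star v)).PosSemidef := by
  refine Matrix.posSemidef_iff_dotProduct_mulVec.mpr ⟨st12_vmv_conjTranspose v, fun x => ?_⟩
  have h : star x ⬝ᵥ (Matrix.vecMulVec v (star v) *ᵥ x)
      = (star v ⬝ᵥ x) * star (star v ⬝ᵥ x) := by
    rw [st12_vmv_mulVec, dotProduct_smul, smul_eq_mul, star_dotProduct, star_star]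
  rw [h]
  exact mul_star_self_nonneg _

lemma st12_star_vK (f : n → ℂ) (g : m → ℂ) :
    star (st12vK f g) = st12vK (star f) (star g) := by
  funext r; simp [st12vK, star_mul']

lemma st12_vK_zero_left (g : m → ℂ) : st12vK (0 : n → ℂ) g = 0 := by
  funext r; simp [st12vK]

lemma st12_vK_zero_right (f : n → ℂ) : st12vK f (0 : m → ℂ) = 0 := by
  funext r; simp [st12vK]

lemma st12_vK_add_right (f : n → ℂ) (g h : m → ℂ) :
    st12vK f (g + h) = st12vK f g + st12vK f h := by
  funext r; simp [st12vK]; ring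

lemma st12_vK_sub_right (f : n → ℂ) (g h : m → ℂ) :
    st12vK f (g - h) = st12vK f g - st12vK f h := by
  funext r; simp [st12vK]; ring
end st12gen


lemma st12_sum4_eq_zero {a b c d : ℂ}
    (h : a * star a + b * star b + c * star c + d * star d = 0) :
    a = 0 ∧ b = 0 ∧ c = 0 ∧ d = 0 := by
  have h' : ((Complex.normSq a + Complex.normSq b + Complex.normSq c + Complex.normSq d : ℝ) : ℂ)
      = 0 := by
    push_cast
    rw [← Complex.mul_conj, ← Complex.mul_conj, ← Complex.mul_conj, ← Complex.mul_conj]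
    simpa [Complex.star_def] using h
  rw [Complex.ofReal_eq_zero] at h'
  have na := Complex.normSq_nonneg a
  have nb := Complex.normSq_nonneg b
  have nc := Complex.normSq_nonneg c
  have nd := Complex.normSq_nonneg d
  refine ⟨Complex.normSq_eq_zero.mp (by linarith), Complex.normSq_eq_zero.mp (by linarith),
    Complex.normSq_eq_zero.mp (by linarith), Complex.normSq_eq_zero.mp (by linarith)⟩

lemma st12_rank1_sum4_kernel {N : Type} [Fintype N] (g1 g2 g3 g4 x : N → ℂ)
    (h : (star g1 ⬝ᵥ x) • g1 + (star g2 ⬝ᵥ x) • g2 + (star g3 ⬝ᵥ x) • g3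
        + (star g4 ⬝ᵥ x) • g4 = 0) :
    star g1 ⬝ᵥ x = 0 ∧ star g2 ⬝ᵥ x = 0 ∧ star g3 ⬝ᵥ x = 0 ∧ star g4 ⬝ᵥ x = 0 := by
  apply st12_sum4_eq_zero
  have h0 := congrArg (fun v => star x ⬝ᵥ v) h
  simp only [dotProduct_add, dotProduct_smul, smul_eq_mul, dotProduct_zero] at h0
  rw [star_dotProduct x g1, star_dotProduct x g2, star_dotProduct x g3,
    star_dotProduct x g4] at h0
  exact h0

lemma st12_star_ch (t : Fin 3) : star (st12ch t) = st12ch t := by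
  funext c; simp [st12ch, apply_ite (star : ℂ → ℂ)]

lemma st12_star_cv (v : st12CI → ℤ) : star (st12cv v) = st12cv v := by
  funext c; simp [st12cv]

lemma st12_cv_sub (u v : st12CI → ℤ) : st12cv (u - v) = st12cv u - st12cv v := by
  funext c; simp [st12cv]

lemma st12_Q_expand : st12cm st12Qz
    = Matrix.vecMulVec (st12ch 0) (st12ch 0) + Matrix.vecMulVec (st12ch 1) (st12ch 1)
      + Matrix.vecMulVec (st12ch 2) (st12ch 2) := by
  ext c c'
  simp only [st12cm_apply, st12Qz, Matrix.of_apply, Matrix.add_apply,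
    Matrix.vecMulVec_apply, st12ch]
  split_ifs <;> norm_num

set_option maxHeartbeats 2000000 in
theorem stmt_12 (ψ0 ψ1 : Fin 2 → ℂ)
    (h00 : ∑ i, starRingEnd ℂ (ψ0 i) * ψ0 i = 1)
    (h11 : ∑ i, starRingEnd ℂ (ψ1 i) * ψ1 i = 1)
    (h01 : ∑ i, starRingEnd ℂ (ψ0 i) * ψ1 i = 0) :
    let Hsp : Matrix (Fin 2 × (Fin 3 → Bool)) (Fin 2 × (Fin 3 → Bool)) ℂ :=
      HsplitOn 3 (Matrix.vecMulVec ψ0 (star ψ0)) (Matrix.vecMulVec ψ1 (star ψ1)) 0 1 2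
    let Pr : Matrix (Fin 2 × (Fin 3 → Bool)) (Fin 2 × (Fin 3 → Bool)) ℂ :=
      (1 : Matrix (Fin 2) (Fin 2) ℂ) ⊗ₖ clockProj 3
    let φ0 : Fin 2 × (Fin 3 → Bool) → ℂ := fun r =>
      (Real.sqrt 2 : ℂ)⁻¹ * ψ0 r.1 *
        ((if r.2 = oneHot 3 0 then 1 else 0) + (if r.2 = oneHot 3 1 then 1 else 0))
    let φ1 : Fin 2 × (Fin 3 → Bool) → ℂ := fun r =>
      (Real.sqrt 2 : ℂ)⁻¹ * ψ1 r.1 *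
        ((if r.2 = oneHot 3 0 then 1 else 0) + (if r.2 = oneHot 3 2 then 1 else 0))
    Hsp.IsHermitian ∧
    (Pr * Hsp * Pr).PosSemidef ∧
    LinearMap.ker (Pr * Hsp * Pr).mulVecLin ⊓ LinearMap.range Pr.mulVecLin
      = Submodule.span ℂ {φ0, φ1} ∧
    Hsp.mulVec φ0 = 0 ∧ Hsp.mulVec φ1 = 0 := by
  intro Hsp Pr phi0 phi1
  have hsq : ((Real.sqrt 2 : ℝ) : ℂ) ≠ 0 :=
    Complex.ofReal_ne_zero.mpr (Real.sqrt_ne_zero'.mpr (by norm_num))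
  have h10 : ∑ i, starRingEnd ℂ (ψ1 i) * ψ0 i = 0 := by
    have := congrArg (starRingEnd ℂ) h01
    simpa [map_sum, mul_comm] using this
  simp only [starRingEnd_apply, Fin.sum_univ_two] at h00 h11 h01 h10
  -- completeness
  have hcomp : Matrix.vecMulVec ψ0 (star ψ0) + Matrix.vecMulVec ψ1 (star ψ1)
      = (1 : Matrix (Fin 2) (Fin 2) ℂ) := by
    set U : Matrix (Fin 2) (Fin 2) ℂ := Matrix.of ![star ψ0, star ψ1] with hU_def
    have hU : U * Uᴴ = 1 := by
      ext k l
      fin_cases k <;> fin_cases l <;>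
        simp [hU_def, Matrix.mul_apply, Fin.sum_univ_two, Matrix.conjTranspose_apply,
          Matrix.one_apply] <;>
        first
          | exact h00
          | exact h11
          | exact h01
          | exact h10
    have hUU : Uᴴ * U = 1 := by rwa [mul_eq_one_comm] at hU
    ext i j
    rw [Matrix.add_apply, ← hUU]
    simp [hU_def, Matrix.mul_apply, Fin.sum_univ_two, Matrix.conjTranspose_apply,
      Matrix.vecMulVec_apply]
    try ring
  -- structured forms
  have hHsp : Hsp = Matrix.vecMulVec ψ1 (star ψ1) ⊗ₖ st12cm (st12C1z 1)
      + Matrix.vecMulVec ψ0 (star ψ0) ⊗ₖ st12cm (st12C1z 2)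
      + (1 : Matrix (Fin 2) (Fin 2) ℂ) ⊗ₖ st12cm st12Bz := by
    show HsplitOn 3 (Matrix.vecMulVec ψ0 (star ψ0)) (Matrix.vecMulVec ψ1 (star ψ1)) 0 1 2 = _
    rw [HsplitOn]
    rw [st12_clock1_cast, st12_clock1_cast, st12_clock1_cast, st12_clock2_cast,
      st12_clock2_cast, st12_clock2_cast, st12_clock2_cast, st12_clock2_cast, st12_clock2_cast]
    simp only [st12Bz, map_add, map_sub]
  have hPr : Pr = (1 : Matrix (Fin 2) (Fin 2) ℂ) ⊗ₖ st12cm st12Qz := by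
    show (1 : Matrix (Fin 2) (Fin 2) ℂ) ⊗ₖ clockProj 3 = _
    rw [st12_clockProj_cast]
  -- the projected Hamiltonian as a sum of rank ones
  have hwc : st12cv (st12chz 0 - st12chz 1 - st12chz 2)
      = st12ch 0 - st12ch 1 - st12ch 2 := by
    rw [st12_cv_sub, st12_cv_sub, ← st12_ch_cast, ← st12_ch_cast, ← st12_ch_cast]
  have hG : Pr * Hsp * Pr
      = Matrix.vecMulVec (st12vK ψ1 (st12ch 1)) (star (st12vK ψ1 (st12ch 1)))
      + Matrix.vecMulVec (st12vK ψ0 (st12ch 2)) (star (st12vK ψ0 (st12ch 2)))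
      + (Matrix.vecMulVec (st12vK ψ0 (st12ch 0 - st12ch 1 - st12ch 2))
          (star (st12vK ψ0 (st12ch 0 - st12ch 1 - st12ch 2)))
        + Matrix.vecMulVec (st12vK ψ1 (st12ch 0 - st12ch 1 - st12ch 2))
          (star (st12vK ψ1 (st12ch 0 - st12ch 1 - st12ch 2)))) := by
    rw [hHsp, hPr]
    simp only [Matrix.mul_add, Matrix.add_mul, ← Matrix.mul_kronecker_mul, Matrix.one_mul,
      Matrix.mul_one, ← _root_.map_mul]
    rw [st12_dQC1Q, st12_dQC2Q, st12_dQBQ]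
    rw [st12_cast_r1, st12_cast_r1, st12_cast_r1]
    rw [hwc, ← st12_ch_cast, ← st12_ch_cast]
    rw [← hcomp, Matrix.add_kronecker]
    rw [st12_kron_vmv, st12_kron_vmv, st12_kron_vmv, st12_kron_vmv]
    simp only [st12_star_vK, st12_star_ch, star_sub]
  -- the ψ-projector actions
  have hPψ1ψ0 : Matrix.vecMulVec ψ1 (star ψ1) *ᵥ ψ0 = 0 := by
    rw [st12_vmv_mulVec]
    have hz : star ψ1 ⬝ᵥ ψ0 = 0 := by
      simpa [dotProduct, Fin.sum_univ_two] using h10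
    rw [hz, zero_smul]
  have hPψ0ψ1 : Matrix.vecMulVec ψ0 (star ψ0) *ᵥ ψ1 = 0 := by
    rw [st12_vmv_mulVec]
    have hz : star ψ0 ⬝ᵥ ψ1 = 0 := by
      simpa [dotProduct, Fin.sum_univ_two] using h01
    rw [hz, zero_smul]
  -- phi identities
  have hphi0 : phi0 = ((Real.sqrt 2 : ℝ) : ℂ)⁻¹ •
      st12vK ψ0 (st12cv (st12chz 0 + st12chz 1)) := by
    funext r
    show (Real.sqrt 2 : ℂ)⁻¹ * ψ0 r.1 *
        ((if r.2 = oneHot 3 0 then 1 else 0) + (if r.2 = oneHot 3 1 then 1 else 0)) = _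
    simp only [Pi.smul_apply, smul_eq_mul, st12vK, st12cv, st12chz, Pi.add_apply]
    split_ifs <;> push_cast <;> ring
  have hphi1 : phi1 = ((Real.sqrt 2 : ℝ) : ℂ)⁻¹ •
      st12vK ψ1 (st12cv (st12chz 0 + st12chz 2)) := by
    funext r
    show (Real.sqrt 2 : ℂ)⁻¹ * ψ1 r.1 *
        ((if r.2 = oneHot 3 0 then 1 else 0) + (if r.2 = oneHot 3 2 then 1 else 0)) = _
    simp only [Pi.smul_apply, smul_eq_mul, st12vK, st12cv, st12chz, Pi.add_apply]
    split_ifs <;> push_cast <;> ring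
  -- H kills phi0, phi1
  have hHv0 : Hsp *ᵥ st12vK ψ0 (st12cv (st12chz 0 + st12chz 1)) = 0 := by
    rw [hHsp, Matrix.add_mulVec, Matrix.add_mulVec, st12_kron_mulVec, st12_kron_mulVec,
      st12_kron_mulVec, hPψ1ψ0, st12_cast_mulVec, st12_cast_mulVec, st12_cast_mulVec,
      st12_dC2v01, st12_dB01, st12_cv_zero, Matrix.one_mulVec, st12_vK_zero_left,
      st12_vK_zero_right, st12_vK_zero_right]
    simp
  have hHv1 : Hsp *ᵥ st12vK ψ1 (st12cv (st12chz 0 + st12chz 2)) = 0 := by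
    rw [hHsp, Matrix.add_mulVec, Matrix.add_mulVec, st12_kron_mulVec, st12_kron_mulVec,
      st12_kron_mulVec, hPψ0ψ1, st12_cast_mulVec, st12_cast_mulVec, st12_cast_mulVec,
      st12_dC1v02, st12_dB02, st12_cv_zero, Matrix.one_mulVec, st12_vK_zero_left,
      st12_vK_zero_right, st12_vK_zero_right]
    simp
  have hHphi0 : Hsp *ᵥ phi0 = 0 := by rw [hphi0, Matrix.mulVec_smul, hHv0, smul_zero]
  have hHphi1 : Hsp *ᵥ phi1 = 0 := by rw [hphi1, Matrix.mulVec_smul, hHv1, smul_zero]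
  -- Pr fixes phi0, phi1
  have hPrphi0 : Pr *ᵥ phi0 = phi0 := by
    rw [hphi0, Matrix.mulVec_smul, hPr, st12_kron_mulVec, Matrix.one_mulVec,
      st12_cast_mulVec, st12_dQ01]
  have hPrphi1 : Pr *ᵥ phi1 = phi1 := by
    rw [hphi1, Matrix.mulVec_smul, hPr, st12_kron_mulVec, Matrix.one_mulVec,
      st12_cast_mulVec, st12_dQ02]
  have hPrPr : Pr * Pr = Pr := by
    rw [hPr, ← Matrix.mul_kronecker_mul, Matrix.one_mul, ← _root_.map_mul, st12_dQQ]
  have hGphi0 : (Pr * Hsp * Pr) *ᵥ phi0 = 0 := by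
    rw [← Matrix.mulVec_mulVec, hPrphi0, ← Matrix.mulVec_mulVec, hHphi0, Matrix.mulVec_zero]
  have hGphi1 : (Pr * Hsp * Pr) *ᵥ phi1 = 0 := by
    rw [← Matrix.mulVec_mulVec, hPrphi1, ← Matrix.mulVec_mulVec, hHphi1, Matrix.mulVec_zero]
  refine ⟨?_, ?_, ?_, hHphi0, hHphi1⟩
  · -- Hermitian
    show Hspᴴ = Hsp
    rw [hHsp]
    rw [Matrix.conjTranspose_add, Matrix.conjTranspose_add, st12_kron_conjTranspose,
      st12_kron_conjTranspose, st12_kron_conjTranspose, st12_vmv_conjTranspose,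
      st12_vmv_conjTranspose, Matrix.conjTranspose_one, st12_cast_conjTranspose,
      st12_cast_conjTranspose, st12_cast_conjTranspose, st12_dBt, st12_dC1t, st12_dC1t]
  · -- PosSemidef
    rw [hG]
    exact ((st12_psd_vmv _).add (st12_psd_vmv _)).add
      ((st12_psd_vmv _).add (st12_psd_vmv _))
  · -- kernel characterization
    refine le_antisymm ?_ ?_
    · intro x hx
      rw [Submodule.mem_inf] at hx
      obtain ⟨hk, hr⟩ := hx
      rw [LinearMap.mem_ker, Matrix.mulVecLin_apply] at hk
      rw [LinearMap.mem_range] at hr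
      obtain ⟨y, hy⟩ := hr
      rw [Matrix.mulVecLin_apply] at hy
      have hPrx : Pr *ᵥ x = x := by rw [← hy, Matrix.mulVec_mulVec, hPrPr]
      rw [hG] at hk
      rw [Matrix.add_mulVec, Matrix.add_mulVec, Matrix.add_mulVec, st12_vmv_mulVec,
        st12_vmv_mulVec, st12_vmv_mulVec, st12_vmv_mulVec, ← add_assoc] at hk
      obtain ⟨e1, e3, e4, e2⟩ := st12_rank1_sum4_kernel _ _ _ _ x hk
      simp only [st12_star_vK, st12_star_ch, star_sub, st12_vK_sub_right,
        sub_dotProduct] at e1 e2 e3 e4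
      -- e1 : d11 = 0, e3 : d02 = 0, e4 : d00 - d01 - d02 = 0 (ψ0), e2 : d10 - d11 - d12 = 0
      have hxe : x
          = (st12vK (star ψ0) (st12ch 0) ⬝ᵥ x) • st12vK ψ0 (st12ch 0)
          + (st12vK (star ψ0) (st12ch 1) ⬝ᵥ x) • st12vK ψ0 (st12ch 1)
          + (st12vK (star ψ0) (st12ch 2) ⬝ᵥ x) • st12vK ψ0 (st12ch 2)
          + ((st12vK (star ψ1) (st12ch 0) ⬝ᵥ x) • st12vK ψ1 (st12ch 0)
          + (st12vK (star ψ1) (st12ch 1) ⬝ᵥ x) • st12vK ψ1 (st12ch 1)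
          + (st12vK (star ψ1) (st12ch 2) ⬝ᵥ x) • st12vK ψ1 (st12ch 2)) := by
        conv_lhs => rw [← hPrx]
        rw [hPr, st12_Q_expand, ← hcomp, Matrix.add_kronecker, Matrix.kronecker_add,
          Matrix.kronecker_add, Matrix.kronecker_add, Matrix.kronecker_add,
          st12_kron_vmv, st12_kron_vmv, st12_kron_vmv, st12_kron_vmv, st12_kron_vmv,
          st12_kron_vmv, Matrix.add_mulVec, Matrix.add_mulVec, Matrix.add_mulVec,
          Matrix.add_mulVec, Matrix.add_mulVec, st12_vmv_mulVec, st12_vmv_mulVec,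
          st12_vmv_mulVec, st12_vmv_mulVec, st12_vmv_mulVec, st12_vmv_mulVec]
      have g01 : st12vK (star ψ0) (st12ch 1) ⬝ᵥ x = st12vK (star ψ0) (st12ch 0) ⬝ᵥ x := by
        linear_combination -e4 - e3
      have g12 : st12vK (star ψ1) (st12ch 2) ⬝ᵥ x = st12vK (star ψ1) (st12ch 0) ⬝ᵥ x := by
        linear_combination -e2 - e1
      rw [Submodule.mem_span_pair]
      refine ⟨((Real.sqrt 2 : ℝ) : ℂ) * (st12vK (star ψ0) (st12ch 0) ⬝ᵥ x),
        ((Real.sqrt 2 : ℝ) : ℂ) * (st12vK (star ψ1) (st12ch 0) ⬝ᵥ x), ?_⟩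
      have hphi0' : phi0 = ((Real.sqrt 2 : ℝ) : ℂ)⁻¹ •
          (st12vK ψ0 (st12ch 0) + st12vK ψ0 (st12ch 1)) := by
        rw [hphi0, st12_cv_add, ← st12_ch_cast, ← st12_ch_cast, st12_vK_add_right]
      have hphi1' : phi1 = ((Real.sqrt 2 : ℝ) : ℂ)⁻¹ •
          (st12vK ψ1 (st12ch 0) + st12vK ψ1 (st12ch 2)) := by
        rw [hphi1, st12_cv_add, ← st12_ch_cast, ← st12_ch_cast, st12_vK_add_right]
      rw [hphi0', hphi1', smul_smul, smul_smul]
      have hc : ∀ z : ℂ, ((Real.sqrt 2 : ℝ) : ℂ) * z * ((Real.sqrt 2 : ℝ) : ℂ)⁻¹ = z := by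
        intro z; field_simp
      rw [hc, hc]
      conv_rhs => rw [hxe]
      rw [g01, g12, e1, e3]
      simp only [smul_add, zero_smul, add_zero, zero_add]
    · rw [Submodule.span_le]
      intro z hz
      simp only [Set.mem_insert_iff, Set.mem_singleton_iff] at hz
      rcases hz with rfl | rfl
      · exact Submodule.mem_inf.mpr
          ⟨LinearMap.mem_ker.mpr (by rw [Matrix.mulVecLin_apply]; exact hGphi0),
           LinearMap.mem_range.mpr ⟨phi0, by rw [Matrix.mulVecLin_apply]; exact hPrphi0⟩⟩
      · exact Submodule.mem_inf.mpr
          ⟨LinearMap.mem_ker.mpr (by rw [Matrix.mulVecLin_apply]; exact hGphi1),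
           LinearMap.mem_range.mpr ⟨phi1, by rw [Matrix.mulVecLin_apply]; exact hPrphi1⟩⟩
end

section
/- Let k ≥ 1, ζ = exp(2πi/2^k) ∈ ℂ, and d = 2^{k−1}. Let N ≥ 1 and let H ∈ ℂ^{N×N} be a Hermitian matrix that is 1-sparse (every row and every column has at most one nonzero entry) and whose entries lie in ℤ[ζ] with all coordinates bounded in absolute value by 2^L − 1; i.e., each entry equals ∑_{m=0}^{d−1} b_m ζ^m with b_m ∈ ℤ, |b_m| < 2^L. Then there exist matrices U^{l,i} ∈ ℂ^{N×N}, for l ∈ {0,…,L−1} and i ∈ {1,…,2^{k+1}}, each of which is unitary and 1-sparse with every nonzero entry of the form ±ζ^m for some m ∈ {0,…,d−1}, such that H = ∑_{l=0}^{L−1} ∑_{i=1}^{2^{k+1}} 2^{l−1} U^{l,i}. -/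
open Matrix

private lemma natbits : ∀ (L a : ℕ), a < 2 ^ L →
    ∑ l ∈ Finset.range L, 2 ^ l * (a.testBit l).toNat = a := by
  intro L
  induction L with
  | zero => intro a ha; interval_cases a; simp
  | succ n ih =>
    intro a ha
    rw [Finset.sum_range_succ']
    have h1 : ∀ i, a.testBit (i + 1) = (a / 2).testBit i := fun i => Nat.testBit_succ a i
    have h2 : ∑ i ∈ Finset.range n, 2 ^ (i + 1) * (a.testBit (i + 1)).toNat
        = 2 * ∑ i ∈ Finset.range n, 2 ^ i * ((a / 2).testBit i).toNat := by
      rw [Finset.mul_sum]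
      refine Finset.sum_congr rfl fun i _ => by rw [h1, pow_succ]; ring
    have hd : a / 2 < 2 ^ n := by omega
    rw [h2, ih _ hd, Nat.testBit_zero]
    rcases Nat.mod_two_eq_zero_or_one a with h | h <;> simp [h] <;> omega

/-- signed binary digit -/
private def dgt (a : ℤ) (l : ℕ) : ℤ :=
  (if 0 ≤ a then 1 else -1) * ((a.natAbs.testBit l).toNat : ℤ)

private lemma dgt_cases (a : ℤ) (l : ℕ) : dgt a l = -1 ∨ dgt a l = 0 ∨ dgt a l = 1 := by
  unfold dgt
  rcases Nat.testBit a.natAbs l with _ | _ <;> split <;> simp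

private lemma intbits (L : ℕ) (a : ℤ) (ha : |a| < 2 ^ L) :
    ∑ l ∈ Finset.range L, 2 ^ l * dgt a l = a := by
  have hna : a.natAbs < 2 ^ L := by
    have : (a.natAbs : ℤ) < 2 ^ L := by rw [← Int.abs_eq_natAbs]; exact ha
    exact_mod_cast this
  have key := natbits L a.natAbs hna
  have : ∑ l ∈ Finset.range L, 2 ^ l * dgt a l
      = (if 0 ≤ a then 1 else -1) *
        ((∑ l ∈ Finset.range L, 2 ^ l * (a.natAbs.testBit l).toNat : ℕ) : ℤ) := by
    push_cast
    rw [Finset.mul_sum]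
    refine Finset.sum_congr rfl fun l _ => by unfold dgt; ring
  rw [this, key]
  split <;> omega

/-- four signs summing to twice a digit -/
private def s4 (j : Fin 4) (d : ℤ) : ℤ :=
  match j with
  | 0 => 1
  | 1 => -1
  | 2 => if d = 0 then 1 else d
  | 3 => if d = 0 then -1 else d

private lemma s4_pm (j : Fin 4) (d : ℤ) (hd : d = -1 ∨ d = 0 ∨ d = 1) :
    s4 j d = 1 ∨ s4 j d = -1 := by
  fin_cases j <;> rcases hd with h | h | h <;> simp [s4, h]

private lemma s4_sum (d : ℤ) (hd : d = -1 ∨ d = 0 ∨ d = 1) :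
    ∑ j : Fin 4, s4 j d = 2 * d := by
  rcases hd with h | h | h <;> subst h <;> decide

/-- A 1-sparse Hamiltonian with entries in `ℤ[ζ_{2^k}]` of bounded coordinates is a
linear combination, with coefficients `2^{l-1}`, of 1-sparse unitaries whose nonzero
entries are `±ζ^m`. -/
theorem stmt_15 (k : ℕ) (hk : 1 ≤ k) (L N : ℕ) (hN : 1 ≤ N) (ζ : ℂ)
    (hζ : ζ = Complex.exp (2 * Real.pi * Complex.I / (2 ^ k)))
    (H : Matrix (Fin N) (Fin N) ℂ) (hHerm : H.IsHermitian)
    (hrow : ∀ r, {j | H r j ≠ 0}.Subsingleton)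
    (hcol : ∀ s, {i | H i s ≠ 0}.Subsingleton)
    (hent : ∀ r s, ∃ b : Fin (2 ^ (k - 1)) → ℤ, (∀ m, |b m| < 2 ^ L) ∧
      H r s = ∑ m, (b m : ℂ) * ζ ^ (m : ℕ)) :
    ∃ U : Fin L → Fin (2 ^ (k + 1)) → Matrix (Fin N) (Fin N) ℂ,
      (∀ l i,
        (U l i)ᴴ * U l i = 1 ∧
        (∀ r, {j | U l i r j ≠ 0}.Subsingleton) ∧
        (∀ s, {r | U l i r s ≠ 0}.Subsingleton) ∧
        (∀ r s, U l i r s ≠ 0 →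
          ∃ m : Fin (2 ^ (k - 1)), U l i r s = ζ ^ (m : ℕ) ∨ U l i r s = -ζ ^ (m : ℕ))) ∧
      H = ∑ l : Fin L, ∑ i, ((2 : ℂ) ^ (((l : ℕ) : ℤ) - 1)) • U l i := by
  classical
  -- |ζ| = 1, ζ ≠ 0
  have habsζ : ‖ζ‖ = 1 := by
    rw [hζ]
    have : (2 * Real.pi * Complex.I / (2 ^ k)) = ((2 * Real.pi / 2 ^ k : ℝ) : ℂ) * Complex.I := by
      push_cast; ring
    rw [this, Complex.norm_exp_ofReal_mul_I]
  have hζne : ζ ≠ 0 := by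
    intro h; rw [h] at habsζ; simp at habsζ
  -- the pairing σ
  set σ : Fin N → Fin N := fun r => if h : ∃ j, H r j ≠ 0 then h.choose else r with hσdef
  have hσ1 : ∀ r s, H r s ≠ 0 → σ r = s := by
    intro r s hs
    have hex : ∃ j, H r j ≠ 0 := ⟨s, hs⟩
    have : σ r = hex.choose := by simp [hσdef, dif_pos hex]
    rw [this]
    exact hrow r hex.choose_spec hs
  have hσ0 : ∀ r s, s ≠ σ r → H r s = 0 := by
    intro r s hne
    by_contra h
    exact hne (hσ1 r s h).symm
  have hsymm : ∀ r s, H r s ≠ 0 → H s r ≠ 0 := by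
    intro r s h
    rw [← hHerm.apply s r]
    simpa using h
  have hσinv : Function.Involutive σ := by
    intro r
    by_cases hex : ∃ j, H r j ≠ 0
    · have h1 : σ r = hex.choose := by simp [hσdef, dif_pos hex]
      have h2 : H (σ r) r ≠ 0 := by rw [h1]; exact hsymm _ _ hex.choose_spec
      exact hσ1 (σ r) r h2
    · have : σ r = r := by simp [hσdef, dif_neg hex]
      rw [this, this]
  -- choose the coefficients
  choose b hb1 hb2 using fun r => hent r (σ r)
  -- cardinality equiv
  have hcard : 2 ^ (k - 1) * 4 = 2 ^ (k + 1) := by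
    have : k - 1 + 2 = k + 1 := by omega
    rw [show (4 : ℕ) = 2 ^ 2 from rfl, ← pow_add, this]
  let e : Fin (2 ^ (k - 1)) × Fin 4 ≃ Fin (2 ^ (k + 1)) :=
    finProdFinEquiv.trans (finCongr hcard)
  -- the core matrices
  let c : Fin L → Fin (2 ^ (k - 1)) × Fin 4 → Fin N → ℂ :=
    fun l p r => ((s4 p.2 (dgt (b r p.1) l) : ℤ) : ℂ) * ζ ^ (p.1 : ℕ)
  let V : Fin L → Fin (2 ^ (k - 1)) × Fin 4 → Matrix (Fin N) (Fin N) ℂ :=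
    fun l p => Matrix.of fun r s => if s = σ r then c l p r else 0
  have hcpm : ∀ l p r, c l p r = ζ ^ ((p.1 : Fin (2 ^ (k-1))) : ℕ) ∨ c l p r = -ζ ^ ((p.1 : Fin (2 ^ (k-1))) : ℕ) := by
    intro l p r
    rcases s4_pm p.2 (dgt (b r p.1) l) (dgt_cases _ _) with h | h <;>
      simp [c, h]
  have hcabs : ∀ l p r, ‖c l p r‖ = 1 := by
    intro l p r
    rcases hcpm l p r with h | h <;> rw [h] <;>
      simp [map_pow, habsζ]
  have hcne : ∀ l p r, c l p r ≠ 0 := by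
    intro l p r h
    have := hcabs l p r
    rw [h] at this; simp at this
  refine ⟨fun l i => V l (e.symm i), fun l i => ?_, ?_⟩
  · set p := e.symm i
    refine ⟨?_, ?_, ?_, ?_⟩
    · -- unitary
      ext s t
      rw [Matrix.mul_apply, Matrix.one_apply]
      have key : ∀ r : Fin N, (V l p)ᴴ s r * V l p r t =
          if r = σ s then (if t = s then (starRingEnd ℂ) (c l p r) * c l p r else 0)
          else 0 := by
        intro r
        rw [Matrix.conjTranspose_apply]
        show star (if s = σ r then c l p r else 0) * (if t = σ r then c l p r else 0) = _
        by_cases h : r = σ s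
        · have hσr : σ r = s := by rw [h]; exact hσinv s
          rw [if_pos h, hσr, if_pos rfl]
          by_cases ht : t = s
          · rw [if_pos ht, if_pos ht]; rfl
          · rw [if_neg ht, if_neg ht, mul_zero]
        · have hns : ¬ s = σ r := fun hs => h (by rw [hs, hσinv r])
          rw [if_neg h, if_neg hns, star_zero, zero_mul]
      rw [Finset.sum_congr rfl fun r _ => key r,
        Finset.sum_ite_eq' Finset.univ (σ s)
          (fun r => if t = s then (starRingEnd ℂ) (c l p r) * c l p r else 0)]
      simp only [Finset.mem_univ, if_true]
      have hone : (starRingEnd ℂ) (c l p (σ s)) * c l p (σ s) = 1 := by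
        rw [mul_comm, Complex.mul_conj, Complex.normSq_eq_norm_sq, hcabs]
        norm_num
      by_cases ht : t = s
      · rw [if_pos ht, if_pos ht.symm, hone]
      · rw [if_neg ht, if_neg fun h => ht h.symm]
    · intro r x hx y hy
      have hx' : x = σ r := by by_contra h; exact hx (if_neg h)
      have hy' : y = σ r := by by_contra h; exact hy (if_neg h)
      rw [hx', hy']
    · intro s x hx y hy
      simp only [Set.mem_setOf_eq, V, Matrix.of_apply] at hx hy
      have hx' : s = σ x := by by_contra h; exact hx (if_neg h)
      have hy' : s = σ y := by by_contra h; exact hy (if_neg h)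
      have : σ s = x := by rw [hx', hσinv]
      rw [← this, hy', hσinv]
    · intro r s hrs
      simp only [V, Matrix.of_apply] at hrs ⊢
      have hs : s = σ r := by by_contra h; exact hrs (if_neg h)
      rw [if_pos hs]
      exact ⟨p.1, hcpm l p r⟩
  · -- the sum identity
    ext r s
    have hsum_apply : (∑ l : Fin L, ∑ i, ((2 : ℂ) ^ (((l : ℕ) : ℤ) - 1)) • V l (e.symm i)) r s
        = ∑ l : Fin L, ∑ i : Fin (2 ^ (k+1)), ((2 : ℂ) ^ (((l : ℕ) : ℤ) - 1)) * V l (e.symm i) r s := by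
      simp [Matrix.sum_apply]
    rw [hsum_apply]
    by_cases hs : s = σ r
    · subst hs
      have hi : ∀ l : Fin L, ∑ i : Fin (2 ^ (k+1)), ((2:ℂ) ^ (((l:ℕ):ℤ) - 1)) * V l (e.symm i) r (σ r)
          = ((2:ℂ) ^ (((l:ℕ):ℤ) - 1)) * ∑ p : Fin (2 ^ (k-1)) × Fin 4, c l p r := by
        intro l
        rw [← Finset.mul_sum]
        congr 1
        calc ∑ i : Fin (2 ^ (k+1)), V l (e.symm i) r (σ r)
            = ∑ p : Fin (2 ^ (k-1)) × Fin 4, V l p r (σ r) :=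
              Equiv.sum_comp e.symm (fun p => V l p r (σ r))
          _ = ∑ p : Fin (2 ^ (k-1)) × Fin 4, c l p r :=
              Finset.sum_congr rfl fun p _ => if_pos rfl
      rw [Finset.sum_congr rfl fun l _ => hi l]
      have hp : ∀ l : Fin L, ∑ p : Fin (2 ^ (k-1)) × Fin 4, c l p r
          = ∑ m : Fin (2 ^ (k-1)), ((2 * dgt (b r m) l : ℤ) : ℂ) * ζ ^ (m : ℕ) := by
        intro l
        rw [Fintype.sum_prod_type]
        refine Finset.sum_congr rfl fun m _ => ?_
        have hc : ∀ y : Fin 4, c l (m, y) r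
            = ((s4 y (dgt (b r m) (l : ℕ)) : ℤ) : ℂ) * ζ ^ (m : ℕ) := fun y => rfl
        rw [Finset.sum_congr rfl fun y _ => hc y, ← Finset.sum_mul]
        congr 1
        rw [← s4_sum (dgt (b r m) (l : ℕ)) (dgt_cases _ _)]
        push_cast
        rfl
      have hlp : ∀ l : Fin L, ((2:ℂ) ^ (((l:ℕ):ℤ) - 1)) * ∑ p : Fin (2^(k-1)) × Fin 4, c l p r
          = ∑ m : Fin (2 ^ (k-1)), (((2 ^ (l:ℕ) * dgt (b r m) (l:ℕ) : ℤ)):ℂ) * ζ ^ (m:ℕ) := by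
        intro l
        rw [hp l, Finset.mul_sum]
        refine Finset.sum_congr rfl fun m _ => ?_
        have h0 : ((l:ℕ):ℤ) - 1 + 1 = ((l:ℕ):ℤ) := by ring
        have h2 := zpow_add_one₀ (by norm_num : (2:ℂ) ≠ 0) (((l:ℕ):ℤ) - 1)
        rw [h0] at h2
        have h3 : (2:ℂ) ^ (((l:ℕ):ℤ) - 1) * 2 = (2:ℂ) ^ ((l:ℕ)) := by
          rw [← h2, zpow_natCast]
        push_cast
        rw [← h3]
        ring
      rw [Finset.sum_congr rfl fun l _ => hlp l, Finset.sum_comm, hb2 r]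
      refine Finset.sum_congr rfl fun m _ => ?_
      rw [← Finset.sum_mul]
      congr 1
      have h1 : ∑ l : Fin L, (((2 ^ (l:ℕ) * dgt (b r m) (l:ℕ) : ℤ)):ℂ)
          = ((∑ l ∈ Finset.range L, 2 ^ l * dgt (b r m) l : ℤ) : ℂ) := by
        rw [Fin.sum_univ_eq_sum_range (fun l => (((2 ^ l * dgt (b r m) l : ℤ)):ℂ)) L]
        push_cast
        rfl
      rw [h1, intbits L _ (hb1 r m)]
    · have : ∀ l : Fin L, ∀ i : Fin (2 ^ (k+1)), V l (e.symm i) r s = 0 := by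
        intro l i; simp [V, if_neg hs]
      rw [hσ0 r s hs]
      simp [this]
end

section
/- Let n ≥ 1, ζ_n = exp(2πi/n) ∈ ℂ, and let G_1, …, G_s be finitely many complex matrices, with G_i of size 2^{m_i} × 2^{m_i} and all entries in ℚ(ζ_n). Then there exist integers a, b, c with a² + b² = c² and c prime, such that the 2×2 orthogonal matrix W = (1/c)·[[a, b], [−b, a]] cannot be synthesized from these gates even with ancillas: for every r ≥ 0 there is no matrix C in the multiplicative submonoid of ℂ^{2^{1+r} × 2^{1+r}} generated by all 2^{1+r} × 2^{1+r} permutation matrices together with all matrices G_i ⊗ I_{2^{1+r−m_i}} (for those i with m_i ≤ 1+r) satisfying C(ψ ⊗ e_0) = (Wψ) ⊗ e_0 for all ψ ∈ ℂ², where e_0 ∈ ℂ^{2^r} denotes the first standard basis vector (the all-zero ancilla state). -/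
open Matrix Kronecker

/-- Elements of `ℂ` that become integral over `ℤ` after multiplying by a power of `D`. -/
def denomRing (D : ℤ) : Subsemiring ℂ where
  carrier := {x | ∃ k : ℕ, IsIntegral ℤ ((D : ℂ) ^ k * x)}
  zero_mem' := ⟨0, by simpa using isIntegral_zero⟩
  one_mem' := ⟨0, by simpa using isIntegral_one⟩
  add_mem' := by
    rintro x y ⟨k, hk⟩ ⟨l, hl⟩
    have hD : ∀ j : ℕ, IsIntegral ℤ ((D : ℂ) ^ j) := fun j => by
      have h : IsIntegral ℤ ((D : ℂ)) := by
        simpa using isIntegral_algebraMap (R := ℤ) (A := ℂ) (x := D)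
      exact h.pow j
    refine ⟨k + l, ?_⟩
    have he : (D : ℂ) ^ (k + l) * (x + y)
        = (D : ℂ) ^ l * ((D : ℂ) ^ k * x) + (D : ℂ) ^ k * ((D : ℂ) ^ l * y) := by ring
    rw [he]
    exact ((hD l).mul hk).add ((hD k).mul hl)
  mul_mem' := by
    rintro x y ⟨k, hk⟩ ⟨l, hl⟩
    refine ⟨k + l, ?_⟩
    have he : (D : ℂ) ^ (k + l) * (x * y) = ((D : ℂ) ^ k * x) * ((D : ℂ) ^ l * y) := by ring
    rw [he]
    exact hk.mul hl

lemma exists_pyth_prime (N : ℕ) : ∃ (a b : ℤ) (p : ℕ), Nat.Prime p ∧ N < p ∧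
    a ^ 2 + b ^ 2 = (p : ℤ) ^ 2 ∧ ¬ (p : ℤ) ∣ a := by
  obtain ⟨p, hp, hNp, hp1⟩ := Nat.exists_prime_gt_modEq_one (k := 4) N (by norm_num)
  haveI : Fact p.Prime := ⟨hp⟩
  have hp4 : p % 4 = 1 := by
    have := hp1; unfold Nat.ModEq at this; omega
  obtain ⟨u, v, huv⟩ := Nat.Prime.sq_add_sq (p := p) (by omega)
  have hp5 : 5 ≤ p := by
    have := hp.two_le
    omega
  have hpu : (u : ℤ) ^ 2 + (v : ℤ) ^ 2 = (p : ℤ) := by exact_mod_cast huv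
  have hpZ : Prime ((p : ℤ)) := Nat.prime_iff_prime_int.mp hp
  refine ⟨(u : ℤ) ^ 2 - (v : ℤ) ^ 2, 2 * u * v, p, hp, hNp, ?_, ?_⟩
  · linear_combination ((u:ℤ)^2 + (v:ℤ)^2 + (p:ℤ)) * hpu
  intro hdvd
  have h2 : (p : ℤ) ∣ 2 * (u : ℤ) ^ 2 := by
    have he : 2 * (u : ℤ) ^ 2 = ((u:ℤ)^2 - (v:ℤ)^2) + ((u:ℤ)^2 + (v:ℤ)^2) := by ring
    rw [he, hpu]
    exact dvd_add hdvd dvd_rfl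
  rcases hpZ.2.2 _ _ h2 with h | h
  · have : (p : ℤ) ≤ 2 := Int.le_of_dvd (by norm_num) h
    omega
  · have hpu' : (p : ℤ) ∣ (u : ℤ) := hpZ.dvd_of_dvd_pow h
    have hpun : p ∣ u := by exact_mod_cast hpu'
    rcases Nat.eq_zero_or_pos u with hu0 | hu0
    · -- p = v^2, impossible for a prime ≥ 5
      have hv : v ^ 2 = p := by subst hu0; simpa using huv
      have hvd : v ∣ p := ⟨v, by rw [← hv]; ring⟩
      rcases (Nat.Prime.eq_one_or_self_of_dvd hp v hvd) with h1 | h1 <;> nlinarith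
    · have : p ≤ u := Nat.le_of_dvd hu0 hpun
      nlinarith [huv]

/-- No finite gateset with entries in a cyclotomic field `ℚ(ζ_n)` can exactly synthesize
all Pythagorean single-qubit gates, even with `|0⟩`-initialized ancillas. -/
theorem stmt_17 (n : ℕ) (hn : 1 ≤ n) (ζ : ℂ)
    (hζ : ζ = Complex.exp (2 * Real.pi * Complex.I / n))
    (s : ℕ) (m : Fin s → ℕ)
    (G : ∀ i : Fin s, Matrix (Fin (2 ^ m i)) (Fin (2 ^ m i)) ℂ)
    (hG : ∀ i r c, G i r c ∈ IntermediateField.adjoin ℚ {ζ}) :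
    ∃ a b c : ℤ, a ^ 2 + b ^ 2 = c ^ 2 ∧ Prime c ∧
      ∀ r : ℕ,
        -- the equivalence `Fin 2 × Fin (2^r) ≃ Fin (2^(1+r))` splitting off the first qubit
        ∀ E : Fin 2 × Fin (2 ^ r) ≃ Fin (2 ^ (1 + r)),
          (∀ p : Fin 2 × Fin (2 ^ r), ((E p : ℕ) = (p.1 : ℕ) * 2 ^ r + (p.2 : ℕ))) →
          ¬ ∃ C ∈ Submonoid.closure
              (({P | ∃ σ : Equiv.Perm (Fin (2 ^ (1 + r))), P = σ.permMatrix ℂ} ∪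
                {M | ∃ i : Fin s, ∃ h : m i ≤ 1 + r,
                  M = Matrix.reindex
                        (finProdFinEquiv.trans
                          (finCongr (by rw [← pow_add, Nat.add_sub_cancel' h])))
                        (finProdFinEquiv.trans
                          (finCongr (by rw [← pow_add, Nat.add_sub_cancel' h])))
                        (G i ⊗ₖ
                          (1 : Matrix (Fin (2 ^ (1 + r - m i))) (Fin (2 ^ (1 + r - m i))) ℂ))}) :
                Set (Matrix (Fin (2 ^ (1 + r))) (Fin (2 ^ (1 + r))) ℂ)),
            ∀ ψ : Fin 2 → ℂ,
              C.mulVec (fun p => ψ (E.symm p).1 * (if ((E.symm p).2 : ℕ) = 0 then 1 else 0))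
                = fun p =>
                    (((c : ℂ)⁻¹ • !![(a : ℂ), (b : ℂ); -(b : ℂ), (a : ℂ)]).mulVec ψ)
                        (E.symm p).1 *
                      (if ((E.symm p).2 : ℕ) = 0 then 1 else 0) := by
  classical
  -- ζ is integral over ℚ
  have hn0 : (n : ℂ) ≠ 0 := Nat.cast_ne_zero.mpr (by omega)
  have hζn : ζ ^ n = 1 := by
    rw [hζ, ← Complex.exp_nat_mul,
      show (n : ℂ) * (2 * Real.pi * Complex.I / n) = 2 * Real.pi * Complex.I by field_simp]
    exact Complex.exp_two_pi_mul_I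
  have hζint : IsIntegral ℚ ζ :=
    ⟨Polynomial.X ^ n - Polynomial.C 1, Polynomial.monic_X_pow_sub_C _ (by omega), by
      simp [hζn]⟩
  haveI halg : Algebra.IsAlgebraic ℚ (IntermediateField.adjoin ℚ {ζ}) :=
    IntermediateField.isAlgebraic_adjoin (by
      rintro x hx
      rw [Set.mem_singleton_iff] at hx
      subst hx; exact hζint)
  have hGalg : ∀ (i : Fin s) a b, IsAlgebraic ℤ (G i a b) := by
    intro i a b
    have h0 := ((halg.isAlgebraic
        (⟨G i a b, hG i a b⟩ : IntermediateField.adjoin ℚ {ζ})).isIntegral).map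
      (IntermediateField.adjoin ℚ {ζ}).val
    have h1 : IsIntegral ℚ (G i a b) := by simpa using h0
    exact (IsFractionRing.isAlgebraic_iff ℤ ℚ ℂ).mpr h1.isAlgebraic
  -- clear denominators of all gate entries simultaneously
  have key : ∀ t : Σ i : Fin s, Fin (2 ^ m i) × Fin (2 ^ m i), ∃ dd : ℤ, dd ≠ 0 ∧
      IsIntegral ℤ ((dd : ℂ) * G t.1 t.2.1 t.2.2) := by
    intro t
    obtain ⟨y, hy, hint⟩ := (hGalg t.1 t.2.1 t.2.2).exists_integral_multiple
    refine ⟨y, hy, ?_⟩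
    simpa [Algebra.smul_def] using hint
  choose d hd0 hdint using key
  set D : ℤ := ∏ t : Σ i : Fin s, Fin (2 ^ m i) × Fin (2 ^ m i), d t with hD
  have hD0 : D ≠ 0 := Finset.prod_ne_zero_iff.mpr fun t _ => hd0 t
  have hDint : ∀ j : ℕ, IsIntegral ℤ ((D : ℂ) ^ j) := fun j => by
    have h : IsIntegral ℤ ((D : ℂ)) := by
      simpa using isIntegral_algebraMap (R := ℤ) (A := ℂ) (x := D)
    exact h.pow j
  have hGR : ∀ (i : Fin s) a b, G i a b ∈ denomRing D := by
    intro i a b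
    refine ⟨1, ?_⟩
    have hfact : D = d ⟨i, (a, b)⟩ *
        ∏ t ∈ Finset.univ.erase ⟨i, (a, b)⟩, d t :=
      (Finset.mul_prod_erase Finset.univ d (Finset.mem_univ _)).symm
    have he : (D : ℂ) ^ 1 * G i a b =
        ((∏ t ∈ Finset.univ.erase (⟨i, (a, b)⟩ : Σ i : Fin s,
            Fin (2 ^ m i) × Fin (2 ^ m i)), d t : ℤ) : ℂ) *
          ((d ⟨i, (a, b)⟩ : ℂ) * G i a b) := by
      rw [pow_one, hfact, Int.cast_mul]; ring
    rw [he]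
    have hInt : IsIntegral ℤ (((∏ t ∈ Finset.univ.erase (⟨i, (a, b)⟩ : Σ i : Fin s,
        Fin (2 ^ m i) × Fin (2 ^ m i)), d t : ℤ) : ℂ)) := by
      simpa using isIntegral_algebraMap (R := ℤ) (A := ℂ)
        (x := ∏ t ∈ Finset.univ.erase (⟨i, (a, b)⟩ : Σ i : Fin s,
          Fin (2 ^ m i) × Fin (2 ^ m i)), d t)
    exact hInt.mul (hdint ⟨i, (a, b)⟩)
  -- choose the Pythagorean prime
  obtain ⟨aa, bb, p, hp, hNp, hpyth, hpa⟩ := exists_pyth_prime D.natAbs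
  have hpZ : Prime ((p : ℤ)) := Nat.prime_iff_prime_int.mp hp
  refine ⟨aa, bb, (p : ℤ), hpyth, hpZ, ?_⟩
  intro r E hE
  rintro ⟨C, hCmem, hC⟩
  -- all entries of C lie in `denomRing D`
  have hent : ∀ x y, C x y ∈ denomRing D := by
    refine Submonoid.closure_induction
      (motive := fun M _ => ∀ x y, M x y ∈ denomRing D) ?_ ?_ ?_ hCmem
    · rintro M (⟨σ, rfl⟩ | ⟨i, hmi, rfl⟩) x y
      · rw [Equiv.Perm.permMatrix, PEquiv.toMatrix_apply]
        split_ifs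
        exacts [one_mem _, zero_mem _]
      · rw [Matrix.reindex_apply, Matrix.submatrix_apply, Matrix.kroneckerMap_apply]
        refine mul_mem (hGR _ _ _) ?_
        rw [Matrix.one_apply]
        split_ifs
        exacts [one_mem _, zero_mem _]
    · intro x y
      rw [Matrix.one_apply]
      split_ifs
      exacts [one_mem _, zero_mem _]
    · intro A B _ _ hA hB x y
      rw [Matrix.mul_apply]
      exact sum_mem fun j _ => mul_mem (hA x j) (hB j y)
  -- evaluate the synthesis identity on `|0⟩ ⊗ |0…0⟩`
  set z0 : Fin (2 ^ r) := ⟨0, pow_pos (by norm_num) r⟩ with hz0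
  set p0 : Fin (2 ^ (1 + r)) := E (0, z0) with hp0
  have hv : (fun q => (![(1 : ℂ), 0]) (E.symm q).1 *
      (if ((E.symm q).2 : ℕ) = 0 then 1 else 0)) = Pi.single p0 1 := by
    funext q
    rcases eq_or_ne q p0 with rfl | hq
    · simp [hp0, Equiv.symm_apply_apply, hz0]
    · rw [Pi.single_eq_of_ne hq]
      by_cases h1 : (E.symm q).1 = 0
      · by_cases h2 : ((E.symm q).2 : ℕ) = 0
        · exfalso
          apply hq
          have : E.symm q = (0, z0) := by
            refine Prod.ext h1 (Fin.ext ?_)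
            simp [hz0, h2]
          rw [hp0, ← this, E.apply_symm_apply]
        · simp [h2]
      · have h1' : (E.symm q).1 = 1 := by
          have hlt := (E.symm q).1.isLt
          rw [Fin.ext_iff] at h1 ⊢
          simp only [Fin.val_one, Fin.val_zero] at *
          omega
        rw [h1']
        simp
  have hval := congrFun (hC ![1, 0]) p0
  rw [hv] at hval
  rw [Matrix.mulVec_single] at hval
  have hsymm : E.symm p0 = (0, z0) := by rw [hp0, Equiv.symm_apply_apply]
  rw [hsymm] at hval
  simp [Matrix.smul_apply, Matrix.mulVec, dotProduct, Fin.sum_univ_two, hz0, Matrix.vecHead] at hval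
  -- so the rational number `aa / p` lies in `denomRing D`
  have hmem : ((p : ℂ))⁻¹ * (aa : ℂ) ∈ denomRing D := by
    rw [← hval]
    exact hent p0 p0
  obtain ⟨k, hk⟩ := hmem
  have hppos : (0 : ℚ) < (p : ℚ) := by exact_mod_cast hp.pos
  have hpQ : ((p : ℚ)) ≠ 0 := ne_of_gt hppos
  set qq : ℚ := ((D ^ k * aa : ℤ) : ℚ) / (p : ℚ) with hqq
  have hmap : algebraMap ℚ ℂ qq = (D : ℂ) ^ k * (((p : ℂ))⁻¹ * (aa : ℂ)) := by
    rw [hqq]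
    push_cast
    field_simp
    simp [Rat.cast_intCast, Rat.cast_natCast]
  rw [← hmap] at hk
  have hkq : IsIntegral ℤ qq :=
    (isIntegral_algebraMap_iff (algebraMap ℚ ℂ).injective).mp hk
  obtain ⟨z, hz⟩ := IsIntegrallyClosed.isIntegral_iff.mp hkq
  have hzq : (z : ℚ) * (p : ℚ) = ((D ^ k * aa : ℤ) : ℚ) := by
    have : (z : ℚ) = qq := by exact_mod_cast hz
    rw [this, hqq, div_mul_cancel₀ _ hpQ]
  have hzZ : z * (p : ℤ) = D ^ k * aa := by exact_mod_cast hzq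
  have hdvd : (p : ℤ) ∣ D ^ k * aa := ⟨z, by linarith⟩
  rcases hpZ.2.2 _ _ hdvd with h | h
  · have hD' : (p : ℤ) ∣ D := hpZ.dvd_of_dvd_pow h
    have hD'' : p ∣ D.natAbs := by
      have := Int.natAbs_dvd_natAbs.mpr hD'
      simpa using this
    have := Nat.le_of_dvd (Int.natAbs_pos.mpr hD0) hD''
    omega
  · exact hpa h
end
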